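/- arXiv:1701.04426 — 9 statements merged into one kernel-verified Lean document; each statement's English description precedes it below -/
import Mathlib

section
/- For every integer N ≥ 1 and all positive real link capacities ℓ_1, …, ℓ_{N+1}, the approximate capacity of the N-relay Gaussian half-duplex line network, namely the supremum over all schedules λ of the minimum over all cuts A ⊆ {1,…,N} of the cut value v_λ(A), equals min_{i∈{1,…,N}} ℓ_i·ℓ_{i+1}/(ℓ_i + ℓ_{i+1}), and this supremum is attained by some schedule. -/
open Finset

/-- Node state: node `0` always transmits (`true`), node `N+1` always receives (`false`),
and node `j` for `1 ≤ j ≤ N` takes the state of relay `j`. -/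
def nodeState (N : ℕ) (s : Fin N → Bool) (j : ℕ) : Bool :=
  if j = 0 then true else if h : j - 1 < N then s ⟨j - 1, h⟩ else false

/-- Link `i` (from node `i-1` to node `i`) is active in state `s`. -/
def linkActive (N : ℕ) (s : Fin N → Bool) (i : ℕ) : Prop :=
  nodeState N s (i - 1) = true ∧ nodeState N s i = false

instance (N : ℕ) (s : Fin N → Bool) (i : ℕ) : Decidable (linkActive N s i) := by
  unfold linkActive; infer_instance

/-- The crossing set `E(A)` of a cut `A ⊆ {1,…,N}`. -/
def crossing (N : ℕ) (A : Finset ℕ) : Finset ℕ :=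
  (Finset.Icc 1 (N + 1)).filter
    (fun i => (i ∈ A ∨ i = N + 1) ∧ (i - 1 = 0 ∨ (i - 1 ∈ Finset.Icc 1 N ∧ i - 1 ∉ A)))

/-- The value of cut `A` under schedule `lam`. -/
noncomputable def cutValue (N : ℕ) (ℓ : ℕ → ℝ) (lam : (Fin N → Bool) → ℝ)
    (A : Finset ℕ) : ℝ :=
  ∑ s : Fin N → Bool, lam s * ∑ i ∈ (crossing N A).filter (fun i => linkActive N s i), ℓ i

/-- The minimum over all cuts `A ⊆ {1,…,N}` of the cut value under schedule `lam`. -/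
noncomputable def minCut (N : ℕ) (ℓ : ℕ → ℝ) (lam : (Fin N → Bool) → ℝ) : ℝ :=
  ((Finset.Icc 1 N).powerset).inf' ⟨∅, by simp⟩ (cutValue N ℓ lam)

/-! ### Auxiliary material -/

open MeasureTheory

section Aux

lemma wrap_measurable (a r : ℝ) : MeasurableSet {x : ℝ | Int.fract (x - a) < r} :=
  measurableSet_lt (measurable_fract.comp (measurable_id.sub measurable_const)) measurable_const

lemma fract_shift (a x : ℝ) : Int.fract (x - a) = Int.fract (x - Int.fract a) := by
  have h : x - a = x - Int.fract a - ((⌊a⌋ : ℤ) : ℝ) := by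
    have hfl : ((⌊a⌋ : ℤ) : ℝ) = a - Int.fract a := (Int.self_sub_fract a).symm
    rw [hfl]; ring
  rw [h, Int.fract_sub_intCast]

lemma fract_wrapup (y : ℝ) (h0 : -1 ≤ y) (h1 : y < 0) : Int.fract y = y + 1 := by
  have : Int.fract y = Int.fract (y + 1) := by
    rw [show y + 1 = y + ((1:ℤ):ℝ) by push_cast; ring, Int.fract_add_intCast]
  rw [this]
  exact Int.fract_eq_self.mpr ⟨by linarith, by linarith⟩

lemma wrap_volume (a r : ℝ) (hr0 : 0 ≤ r) (hr1 : r ≤ 1) :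
    volume (Set.Ico (0:ℝ) 1 ∩ {x : ℝ | Int.fract (x - a) < r}) = ENNReal.ofReal r := by
  set b := Int.fract a with hb
  have hb0 : 0 ≤ b := Int.fract_nonneg a
  have hb1 : b < 1 := Int.fract_lt_one a
  have hset : Set.Ico (0:ℝ) 1 ∩ {x : ℝ | Int.fract (x - a) < r}
      = Set.Ico b (min 1 (b + r)) ∪ Set.Ico 0 (b + r - 1) := by
    ext x
    simp only [Set.mem_setOf_eq, Set.mem_inter_iff, Set.mem_Ico, Set.mem_union, lt_min_iff]
    constructor
    · rintro ⟨⟨h0, h1⟩, hf⟩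
      rw [fract_shift a x, ← hb] at hf
      by_cases hxb : b ≤ x
      · rw [Int.fract_eq_self.mpr ⟨by linarith, by linarith⟩] at hf
        exact Or.inl ⟨hxb, h1, by linarith⟩
      · push_neg at hxb
        rw [fract_wrapup (x - b) (by linarith) (by linarith)] at hf
        exact Or.inr ⟨h0, by linarith⟩
    · rintro (⟨hbx, hx1, hxbr⟩ | ⟨h0, hxr⟩)
      · refine ⟨⟨by linarith, hx1⟩, ?_⟩
        rw [fract_shift a x, ← hb, Int.fract_eq_self.mpr ⟨by linarith, by linarith⟩]
        linarith
      · have hxb : x < b := by linarith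
        refine ⟨⟨h0, by linarith⟩, ?_⟩
        rw [fract_shift a x, ← hb, fract_wrapup (x - b) (by linarith) (by linarith)]
        linarith
  rw [hset, measure_union ?hd measurableSet_Ico, Real.volume_Ico, Real.volume_Ico]
  case hd =>
    rw [Set.disjoint_left]
    rintro x ⟨hbx, -⟩ ⟨-, hx2⟩
    linarith
  rcases le_or_gt (b + r) 1 with h | h
  · rw [min_eq_right h]
    rw [show ENNReal.ofReal (b + r - 1 - 0) = 0 from ENNReal.ofReal_eq_zero.mpr (by linarith)]
    rw [add_zero]
    congr 1; ring
  · rw [min_eq_left h.le, ← ENNReal.ofReal_add (by linarith) (by linarith)]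
    congr 1; ring

lemma wrap_volume_compl (a r : ℝ) (hr0 : 0 ≤ r) (hr1 : r ≤ 1) :
    volume (Set.Ico (0:ℝ) 1 ∩ {x : ℝ | Int.fract (x - a) < r}ᶜ) = ENNReal.ofReal (1 - r) := by
  have hs : Set.Ico (0:ℝ) 1 ∩ {x : ℝ | Int.fract (x - a) < r}ᶜ
      = Set.Ico (0:ℝ) 1 \ (Set.Ico (0:ℝ) 1 ∩ {x : ℝ | Int.fract (x - a) < r}) := by
    ext x; simp only [Set.mem_inter_iff, Set.mem_compl_iff, Set.mem_setOf_eq, Set.mem_diff]; tauto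
  rw [hs, measure_diff Set.inter_subset_left
    ((measurableSet_Ico.inter (wrap_measurable a r)).nullMeasurableSet)
    (by rw [wrap_volume a r hr0 hr1]; exact ENNReal.ofReal_ne_top),
    wrap_volume a r hr0 hr1, Real.volume_Ico]
  rw [← ENNReal.ofReal_sub _ hr0]
  norm_num

lemma fract_adjacent (u qa qb : ℝ) (h : Int.fract u < qa) (hqb : 0 ≤ qb) (hsum : qa + qb ≤ 1) :
    ¬ Int.fract (u - qa) < qb := by
  have h0 := Int.fract_nonneg u
  have key : Int.fract (u - qa) = Int.fract u - qa + 1 := by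
    have h1 : Int.fract (u - qa) = Int.fract (Int.fract u - qa) := by
      have h2 : u - qa = Int.fract u - qa + ((⌊u⌋ : ℤ) : ℝ) := by
        have hfl : ((⌊u⌋ : ℤ) : ℝ) = u - Int.fract u := (Int.self_sub_fract u).symm
        rw [hfl]; ring
      rw [h2, Int.fract_add_intCast]
    rw [h1, fract_wrapup _ (by linarith) (by linarith)]
  rw [key]
  intro hc; linarith

noncomputable def tpart (q : ℕ → ℝ) (i : ℕ) : ℝ := ∑ m ∈ Finset.Icc 2 i, q m

noncomputable def stateOf (N : ℕ) (q : ℕ → ℝ) (x : ℝ) : Fin N → Bool :=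
  fun j => decide (Int.fract (x - tpart q (j.1 + 1)) < q (j.1 + 2))

noncomputable def lamOf (N : ℕ) (q : ℕ → ℝ) (s : Fin N → Bool) : ℝ :=
  (volume (Set.Ico (0:ℝ) 1 ∩ {x : ℝ | stateOf N q x = s})).toReal

lemma stateSet_measurable (N : ℕ) (q : ℕ → ℝ) (s : Fin N → Bool) :
    MeasurableSet {x : ℝ | stateOf N q x = s} := by
  have h : {x : ℝ | stateOf N q x = s} = ⋂ j : Fin N,
      (if s j = true then {x : ℝ | Int.fract (x - tpart q (j.1 + 1)) < q (j.1 + 2)}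
       else {x : ℝ | Int.fract (x - tpart q (j.1 + 1)) < q (j.1 + 2)}ᶜ) := by
    ext x
    simp only [Set.mem_setOf_eq, Set.mem_iInter, funext_iff]
    refine forall_congr' fun j => ?_
    cases hs : s j <;> simp [stateOf, hs]
  rw [h]
  exact MeasurableSet.iInter fun j => by
    split_ifs
    · exact wrap_measurable _ _
    · exact (wrap_measurable _ _).compl

lemma sum_lamOf_filter (N : ℕ) (q : ℕ → ℝ) (p : (Fin N → Bool) → Prop) [DecidablePred p] :
    ∑ s ∈ Finset.univ.filter p, lamOf N q s
      = (volume (Set.Ico (0:ℝ) 1 ∩ {x : ℝ | p (stateOf N q x)})).toReal := by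
  have hU : Set.Ico (0:ℝ) 1 ∩ {x : ℝ | p (stateOf N q x)}
      = ⋃ s ∈ Finset.univ.filter p, Set.Ico (0:ℝ) 1 ∩ {x : ℝ | stateOf N q x = s} := by
    ext x
    simp only [Set.mem_inter_iff, Set.mem_setOf_eq, Set.mem_iUnion, Finset.mem_filter,
      Finset.mem_univ, true_and]
    constructor
    · rintro ⟨hx, hp⟩; exact ⟨stateOf N q x, hp, hx, rfl⟩
    · rintro ⟨t, hp, hx, rfl⟩; exact ⟨hx, hp⟩
  rw [hU, measure_biUnion_finset ?hd
    (fun t _ => measurableSet_Ico.inter (stateSet_measurable N q t)),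
    ENNReal.toReal_sum
      (fun t _ => ((measure_mono Set.inter_subset_left).trans_lt (by simp)).ne)]
  · rfl
  case hd =>
    intro t _ t' _ htt'
    rw [Function.onFun, Set.disjoint_left]
    rintro x ⟨-, hx⟩ ⟨-, hx'⟩
    exact htt' (hx ▸ hx' ▸ rfl)

lemma sum_lamOf (N : ℕ) (q : ℕ → ℝ) : ∑ s, lamOf N q s = 1 := by
  have h := sum_lamOf_filter N q (fun _ => True)
  simp only [Finset.filter_true] at h
  rw [h]
  simp [Set.inter_eq_left.mpr (fun x _ => trivial)]

lemma crossing_Icc (N i : ℕ) (h1 : 1 ≤ i) (h2 : i ≤ N + 1) :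
    crossing N (Finset.Icc i N) = {i} := by
  ext j
  simp only [crossing, Finset.mem_filter, Finset.mem_Icc, Finset.mem_singleton]
  omega

lemma crossing_nonempty (N : ℕ) (A : Finset ℕ) (hA : A ⊆ Finset.Icc 1 N) :
    (crossing N A).Nonempty := by
  have hne : (A ∪ {N + 1}).Nonempty := ⟨N + 1, by simp⟩
  set i := (A ∪ {N + 1}).min' hne with hi
  have hmem : i ∈ A ∪ {N + 1} := Finset.min'_mem _ hne
  have hiA : i ∈ A ∨ i = N + 1 := by
    rcases Finset.mem_union.mp hmem with h | h
    · exact Or.inl h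
    · exact Or.inr (Finset.mem_singleton.mp h)
  have hi1 : 1 ≤ i ∧ i ≤ N + 1 := by
    rcases hiA with h | h
    · have := Finset.mem_Icc.mp (hA h); omega
    · omega
  refine ⟨i, ?_⟩
  simp only [crossing, Finset.mem_filter, Finset.mem_Icc]
  refine ⟨⟨hi1.1, hi1.2⟩, hiA, ?_⟩
  by_cases hone : i = 1
  · left; omega
  · right
    have him : i - 1 ∉ A := by
      intro hc
      have := Finset.min'_le _ (i - 1) (Finset.mem_union_left {N+1} hc)
      omega
    exact ⟨by omega, him⟩

lemma cutValue_eq (N : ℕ) (ℓ : ℕ → ℝ) (lam : (Fin N → Bool) → ℝ) (A : Finset ℕ) :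
    cutValue N ℓ lam A = ∑ i ∈ crossing N A,
      ℓ i * ∑ s ∈ Finset.univ.filter (fun s => linkActive N s i), lam s := by
  unfold cutValue
  simp_rw [Finset.sum_filter, Finset.mul_sum]
  rw [Finset.sum_comm]
  refine Finset.sum_congr rfl fun i _ => Finset.sum_congr rfl fun s _ => ?_
  by_cases h : linkActive N s i <;> simp [h, mul_comm]

lemma tpart_succ (q : ℕ → ℝ) (i : ℕ) (h : 2 ≤ i) : tpart q i = tpart q (i - 1) + q i := by
  obtain ⟨k, rfl⟩ := Nat.exists_eq_add_of_le h
  unfold tpart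
  rw [show 2 + k = (1 + k) + 1 by omega, Finset.sum_Icc_succ_top (by omega),
    show 1 + k + 1 - 1 = 1 + k by omega]

lemma active_one_iff (N : ℕ) (hN : 1 ≤ N) (q : ℕ → ℝ) (x : ℝ) :
    linkActive N (stateOf N q x) 1 ↔ ¬ Int.fract (x - tpart q 1) < q 2 := by
  unfold linkActive nodeState
  rw [show (1:ℕ) - 1 = 0 by rfl, if_pos rfl, if_neg (by omega), dif_pos (by omega : 1 - 1 < N)]
  simp [stateOf]

lemma active_top_iff (N : ℕ) (hN : 1 ≤ N) (q : ℕ → ℝ) (x : ℝ) :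
    linkActive N (stateOf N q x) (N + 1) ↔ Int.fract (x - tpart q N) < q (N + 1) := by
  unfold linkActive nodeState
  rw [show N + 1 - 1 = N by omega, if_neg (by omega), if_neg (by omega),
    dif_pos (by omega : N - 1 < N), dif_neg (by omega : ¬ (N < N))]
  simp only [stateOf, decide_eq_true_eq, and_true]
  rw [show N - 1 + 1 = N by omega, show N - 1 + 2 = N + 1 by omega]

lemma active_mid_iff (N : ℕ) (q : ℕ → ℝ) (i : ℕ) (h2 : 2 ≤ i) (hiN : i ≤ N)
    (hqb : 0 ≤ q (i + 1)) (hadj : q i + q (i + 1) ≤ 1) (x : ℝ) :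
    linkActive N (stateOf N q x) i ↔ Int.fract (x - tpart q (i - 1)) < q i := by
  have hA : nodeState N (stateOf N q x) (i - 1)
      = decide (Int.fract (x - tpart q (i - 1)) < q i) := by
    unfold nodeState
    rw [if_neg (by omega), dif_pos (by omega : i - 1 - 1 < N)]
    simp only [stateOf]
    rw [show i - 1 - 1 + 1 = i - 1 by omega, show i - 1 - 1 + 2 = i by omega]
  have hB : nodeState N (stateOf N q x) i
      = decide (Int.fract (x - tpart q i) < q (i + 1)) := by
    unfold nodeState
    rw [if_neg (by omega), dif_pos (by omega : i - 1 < N)]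
    simp only [stateOf]
    rw [show i - 1 + 1 = i by omega, show i - 1 + 2 = i + 1 by omega]
  unfold linkActive
  rw [hA, hB]
  simp only [decide_eq_true_eq, decide_eq_false_iff_not]
  constructor
  · exact fun h => h.1
  · intro h
    refine ⟨h, ?_⟩
    have := fract_adjacent (x - tpart q (i - 1)) (q i) (q (i + 1)) h hqb hadj
    rwa [show x - tpart q (i - 1) - q i = x - tpart q i by rw [tpart_succ q i h2]; ring] at this

end Aux

/-- The approximate capacity of the `N`-relay Gaussian half-duplex line network, i.e.
the supremum over schedules of the minimum cut value, is attained and equals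
`min_{i ∈ [1,N]} ℓ_i ℓ_{i+1} / (ℓ_i + ℓ_{i+1})`. -/
theorem approx_capacity_closed_form (N : ℕ) (hN : 1 ≤ N) (ℓ : ℕ → ℝ)
    (hℓ : ∀ i ∈ Finset.Icc 1 (N + 1), 0 < ℓ i) :
    IsGreatest
      {x : ℝ | ∃ lam : (Fin N → Bool) → ℝ,
        (∀ s, 0 ≤ lam s) ∧ (∑ s, lam s) = 1 ∧ x = minCut N ℓ lam}
      ((Finset.Icc 1 N).inf' (Finset.nonempty_Icc.mpr hN)
        (fun i => ℓ i * ℓ (i + 1) / (ℓ i + ℓ (i + 1)))) := by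
  set C := (Finset.Icc 1 N).inf' (Finset.nonempty_Icc.mpr hN)
      (fun i => ℓ i * ℓ (i + 1) / (ℓ i + ℓ (i + 1))) with hCdef
  have hlmem : ∀ i, 1 ≤ i → i ≤ N + 1 → 0 < ℓ i := fun i h1 h2 =>
    hℓ i (Finset.mem_Icc.mpr ⟨h1, h2⟩)
  have hCle : ∀ i, 1 ≤ i → i ≤ N → C ≤ ℓ i * ℓ (i + 1) / (ℓ i + ℓ (i + 1)) := fun i h1 h2 =>
    Finset.inf'_le _ (Finset.mem_Icc.mpr ⟨h1, h2⟩)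
  have hCpos : 0 < C := by
    rw [hCdef, Finset.lt_inf'_iff]
    intro i hi
    obtain ⟨h1, h2⟩ := Finset.mem_Icc.mp hi
    have la := hlmem i h1 (by omega)
    have lb := hlmem (i + 1) (by omega) (by omega)
    exact div_pos (mul_pos la lb) (add_pos la lb)
  constructor
  · -- membership: the interval schedule achieves C
    set q : ℕ → ℝ := fun i => C / ℓ i with hqdef
    have hadj : ∀ i, 1 ≤ i → i ≤ N → q i + q (i + 1) ≤ 1 := by
      intro i h1 h2
      have la := hlmem i h1 (by omega)
      have lb := hlmem (i + 1) (by omega) (by omega)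
      have h3 : C * (ℓ i + ℓ (i + 1)) ≤ ℓ i * ℓ (i + 1) :=
        (le_div_iff₀ (add_pos la lb)).mp (hCle i h1 h2)
      rw [hqdef]
      rw [div_add_div _ _ (ne_of_gt la) (ne_of_gt lb), div_le_one (mul_pos la lb)]
      nlinarith
    have hqpos : ∀ i, 1 ≤ i → i ≤ N + 1 → 0 < q i := fun i h1 h2 =>
      div_pos hCpos (hlmem i h1 h2)
    have hq1 : ∀ i, 2 ≤ i → i ≤ N + 1 → q i ≤ 1 := by
      intro i h1 h2
      have ha := hadj (i - 1) (by omega) (by omega)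
      rw [show i - 1 + 1 = i by omega] at ha
      have := hqpos (i - 1) (by omega) (by omega)
      linarith
    have hlq : ∀ i, 1 ≤ i → i ≤ N + 1 → ℓ i * q i = C := by
      intro i h1 h2
      have hne : ℓ i ≠ 0 := (hlmem i h1 h2).ne'
      show ℓ i * (C / ℓ i) = C
      rw [mul_comm]
      exact div_mul_cancel₀ C hne
    set P : ℕ → ℝ := fun i => ∑ s ∈ Finset.univ.filter (fun s => linkActive N s i), lamOf N q s
      with hPdef
    have hPnn : ∀ i, 0 ≤ P i := fun i =>
      Finset.sum_nonneg fun s _ => ENNReal.toReal_nonneg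
    have hPmid : ∀ i, 2 ≤ i → i ≤ N + 1 → P i = q i := by
      intro i h2 hi
      have hiff : ∀ x : ℝ, linkActive N (stateOf N q x) i ↔
          Int.fract (x - tpart q (i - 1)) < q i := by
        intro x
        rcases eq_or_lt_of_le hi with heq | hlt
        · rw [heq, show N + 1 - 1 = N by omega]
          exact active_top_iff N hN q x
        · exact active_mid_iff N q i h2 (by omega)
            (hqpos (i + 1) (by omega) (by omega)).le (hadj i (by omega) (by omega)) x
      show (∑ s ∈ Finset.univ.filter (fun s => linkActive N s i), lamOf N q s) = q i
      rw [sum_lamOf_filter N q (fun s => linkActive N s i)]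
      have hseteq : {x : ℝ | linkActive N (stateOf N q x) i}
          = {x : ℝ | Int.fract (x - tpart q (i - 1)) < q i} := Set.ext fun x => hiff x
      rw [hseteq, wrap_volume _ _ (hqpos i (by omega) hi).le (hq1 i h2 hi),
        ENNReal.toReal_ofReal (hqpos i (by omega) hi).le]
    have hP1 : P 1 = 1 - q 2 := by
      show (∑ s ∈ Finset.univ.filter (fun s => linkActive N s 1), lamOf N q s) = 1 - q 2
      rw [sum_lamOf_filter N q (fun s => linkActive N s 1)]
      have hseteq : {x : ℝ | linkActive N (stateOf N q x) 1}
          = {x : ℝ | Int.fract (x - tpart q 1) < q 2}ᶜ := by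
        ext x
        simp only [Set.mem_setOf_eq, Set.mem_compl_iff]
        exact active_one_iff N hN q x
      rw [hseteq, wrap_volume_compl _ _ (hqpos 2 (by omega) (by omega)).le
        (hq1 2 le_rfl (by omega)), ENNReal.toReal_ofReal (by
          have := hq1 2 le_rfl (by omega); linarith)]
    have hPC : ∀ i, 1 ≤ i → i ≤ N + 1 → C ≤ ℓ i * P i := by
      intro i h1 h2
      rcases eq_or_lt_of_le h1 with heq | hgt
      · rw [← heq, hP1]
        have ha := hadj 1 le_rfl hN
        have la := hlmem 1 le_rfl (by omega)
        have := hlq 1 le_rfl (by omega)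
        nlinarith
      · rw [hPmid i hgt h2, hlq i h1 h2]
    refine ⟨lamOf N q, fun s => ENNReal.toReal_nonneg, sum_lamOf N q, ?_⟩
    have hub : minCut N ℓ (lamOf N q) ≤ C := by
      have hmem : Finset.Icc 2 N ∈ (Finset.Icc 1 N).powerset :=
        Finset.mem_powerset.mpr (Finset.Icc_subset_Icc (by omega) le_rfl)
      have hval : cutValue N ℓ (lamOf N q) (Finset.Icc 2 N) = C := by
        rw [cutValue_eq, crossing_Icc N 2 (by omega) (by omega), Finset.sum_singleton]
        show ℓ 2 * P 2 = C
        rw [hPmid 2 le_rfl (by omega), hlq 2 (by omega) (by omega)]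
      exact (Finset.inf'_le _ hmem).trans hval.le
    have hlb : C ≤ minCut N ℓ (lamOf N q) := by
      apply Finset.le_inf'
      intro A hA
      rw [cutValue_eq]
      obtain ⟨i₀, hi₀⟩ := crossing_nonempty N A (Finset.mem_powerset.mp hA)
      have hi₀r := Finset.mem_Icc.mp (Finset.mem_of_mem_filter i₀ hi₀)
      calc C ≤ ℓ i₀ * P i₀ := hPC i₀ hi₀r.1 hi₀r.2
        _ ≤ ∑ i ∈ crossing N A,
            ℓ i * ∑ s ∈ Finset.univ.filter (fun s => linkActive N s i), lamOf N q s := by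
          refine Finset.single_le_sum
            (f := fun i => ℓ i * ∑ s ∈ Finset.univ.filter (fun s => linkActive N s i), lamOf N q s)
            (fun i hi => ?_) hi₀
          have hir := Finset.mem_Icc.mp (Finset.mem_of_mem_filter i hi)
          exact mul_nonneg (hlmem i hir.1 hir.2).le
            (Finset.sum_nonneg fun s _ => ENNReal.toReal_nonneg)
    exact (le_antisymm hub hlb).symm
  · -- upper bound
    rintro x ⟨lam, hlam0, hlam1, rfl⟩
    apply Finset.le_inf'
    intro i hi
    obtain ⟨h1, h2⟩ := Finset.mem_Icc.mp hi
    have la := hlmem i h1 (by omega)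
    have lb := hlmem (i + 1) (by omega) (by omega)
    set P : ℕ → ℝ := fun j => ∑ s ∈ Finset.univ.filter (fun s => linkActive N s j), lam s
      with hPdef
    have hPnn : ∀ j, 0 ≤ P j := fun j => Finset.sum_nonneg fun s _ => hlam0 s
    have hcut : ∀ j, 1 ≤ j → j ≤ N + 1 → minCut N ℓ lam ≤ ℓ j * P j := by
      intro j hj1 hj2
      have hmem : Finset.Icc j N ∈ (Finset.Icc 1 N).powerset :=
        Finset.mem_powerset.mpr (Finset.Icc_subset_Icc hj1 le_rfl)
      have hval : cutValue N ℓ lam (Finset.Icc j N) = ℓ j * P j := by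
        rw [cutValue_eq, crossing_Icc N j hj1 hj2, Finset.sum_singleton]
      exact (Finset.inf'_le _ hmem).trans hval.le
    have hm1 := hcut i h1 (by omega)
    have hm2 := hcut (i + 1) (by omega) (by omega)
    have hsum : P i + P (i + 1) ≤ 1 := by
      have hdisj : Disjoint (Finset.univ.filter (fun s => linkActive N s i))
          (Finset.univ.filter (fun s => linkActive N s (i + 1))) := by
        rw [Finset.disjoint_left]
        intro s hs hs'
        have hfa := (Finset.mem_filter.mp hs).2
        have hfb := (Finset.mem_filter.mp hs').2
        have hx : nodeState N s i = false := hfa.2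
        have hy : nodeState N s (i + 1 - 1) = true := hfb.1
        rw [show i + 1 - 1 = i by omega, hx] at hy
        exact absurd hy (by simp)
      rw [hPdef]
      rw [← Finset.sum_union hdisj, ← hlam1]
      exact Finset.sum_le_sum_of_subset_of_nonneg (Finset.subset_univ _)
        (fun s _ _ => hlam0 s)
    rw [le_div_iff₀ (add_pos la lb)]
    nlinarith [mul_le_mul_of_nonneg_right hm1 lb.le, mul_le_mul_of_nonneg_right hm2 la.le,
      mul_le_mul_of_nonneg_left hsum (mul_pos la lb).le, hPnn i, hPnn (i + 1)]
end

section
/- For every integer N ≥ 1 and all positive real link capacities ℓ_1, …, ℓ_{N+1}, there exists a simple schedule λ, i.e., one whose support {s : λ_s ≠ 0} has at most N+1 elements, such that C^λ = min_{i∈{1,…,N}} ℓ_i·ℓ_{i+1}/(ℓ_i + ℓ_{i+1}). -/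
open Finset

section LineNetworkAux

open MeasureTheory

lemma lineAux_fract_wrap {a : ℝ} (h0 : 0 ≤ a + 1) (h1 : a < 0) : Int.fract a = a + 1 := by
  have h2 : Int.fract (a + (1 : ℤ)) = Int.fract a := Int.fract_add_intCast a 1
  rw [Int.cast_one] at h2
  rw [← h2]
  exact Int.fract_eq_self.mpr ⟨h0, by linarith⟩

lemma lineAux_fract_sub {a b : ℝ} (ha0 : 0 ≤ a) (ha1 : a < 1) (hb0 : 0 ≤ b) (hb1 : b < 1) :
    Int.fract (a - b) = if b ≤ a then a - b else a - b + 1 := by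
  split_ifs with h
  · exact Int.fract_eq_self.mpr ⟨by linarith, by linarith⟩
  · rw [not_le] at h
    exact lineAux_fract_wrap (by linarith) (by linarith)

lemma lineAux_vol_window (c t : ℝ) (ht0 : 0 ≤ t) (ht1 : t ≤ 1) :
    volume {θ : ℝ | θ ∈ Set.Ico (0:ℝ) 1 ∧ Int.fract (θ - c) < t} = ENNReal.ofReal t := by
  set c' := Int.fract c with hc'
  have hc0 : 0 ≤ c' := Int.fract_nonneg c
  have hc1 : c' < 1 := Int.fract_lt_one c
  have hfr : ∀ θ : ℝ, Int.fract (θ - c) = Int.fract (θ - c') := by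
    intro θ
    rw [show θ - c = (θ - c') - (⌊c⌋ : ℤ) by rw [hc', ← Int.self_sub_floor]; ring,
      Int.fract_sub_intCast]
  have hset : {θ : ℝ | θ ∈ Set.Ico (0:ℝ) 1 ∧ Int.fract (θ - c) < t}
      = Set.Ico c' (min 1 (c' + t)) ∪ Set.Ico 0 (c' + t - 1) := by
    ext θ
    simp only [Set.mem_setOf_eq, Set.mem_Ico, Set.mem_union, hfr]
    constructor
    · rintro ⟨⟨h0, h1⟩, hlt⟩
      rcases le_or_gt c' θ with h | h
      · rw [lineAux_fract_sub h0 h1 hc0 hc1, if_pos h] at hlt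
        exact Or.inl ⟨h, lt_min h1 (by linarith)⟩
      · rw [lineAux_fract_sub h0 h1 hc0 hc1, if_neg (not_le.mpr h)] at hlt
        exact Or.inr ⟨h0, by linarith⟩
    · rintro (⟨h1, h2⟩ | ⟨h1, h2⟩)
      · have h2' := lt_min_iff.mp h2
        refine ⟨⟨by linarith, h2'.1⟩, ?_⟩
        rw [lineAux_fract_sub (by linarith) h2'.1 hc0 hc1, if_pos h1]
        linarith [h2'.2]
      · have hθ1 : θ < 1 := by linarith
        refine ⟨⟨h1, hθ1⟩, ?_⟩
        rw [lineAux_fract_sub h1 hθ1 hc0 hc1, if_neg (by push_neg; linarith)]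
        linarith
  rw [hset, measure_union ?_ measurableSet_Ico, Real.volume_Ico, Real.volume_Ico]
  · rcases le_or_gt (c' + t) 1 with h | h
    · rw [min_eq_right (by linarith : c' + t ≤ 1)]
      rw [show c' + t - c' = t by ring, ENNReal.ofReal_eq_zero.mpr (by linarith : c' + t - 1 - 0 ≤ 0)]
      simp
    · rw [min_eq_left (by linarith : (1:ℝ) ≤ c' + t), ← ENNReal.ofReal_add (by linarith) (by linarith)]
      ring_nf
  · exact Set.disjoint_left.mpr fun θ hθ hθ' => absurd hθ.1 (by simp at hθ' ⊢; linarith [hθ'.2])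

lemma lineAux_window_imp (a u v θ : ℝ) (hu0 : 0 ≤ u) (hv0 : 0 ≤ v) (huv : u + v ≤ 1)
    (h : Int.fract (θ - (a + u)) < v) : u ≤ Int.fract (θ - a) := by
  by_contra hlt
  push_neg at hlt
  have hw0 : 0 ≤ Int.fract (θ - a) := Int.fract_nonneg _
  have h2 : Int.fract (θ - (a + u)) = Int.fract (Int.fract (θ - a) - u) := by
    rw [show θ - (a + u) = (Int.fract (θ - a) - u) + (⌊θ - a⌋ : ℤ) by
      rw [← Int.self_sub_floor]; ring, Int.fract_add_intCast]
  have h3 : Int.fract (Int.fract (θ - a) - u) = Int.fract (θ - a) - u + 1 :=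
    lineAux_fract_wrap (by linarith) (by linarith)
  rw [h2, h3] at h
  linarith

lemma lineAux_window_iff (θ ρ c τ : ℝ) (hθ : θ ∈ Set.Ico (0:ℝ) 1) (hρ : ρ ∈ Set.Ico (0:ℝ) 1)
    (hρθ : ρ ≤ θ) (hc : c ∈ Set.Ico (0:ℝ) 1) (hτ0 : 0 < τ) (hτ1 : τ < 1)
    (hcρ : c ≤ θ → c ≤ ρ) (hbρ : Int.fract (c + τ) ≤ θ → Int.fract (c + τ) ≤ ρ) :
    Int.fract (θ - c) < τ ↔ Int.fract (ρ - c) < τ := by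
  obtain ⟨hθ0, hθ1⟩ := hθ
  obtain ⟨hρ0, hρ1⟩ := hρ
  obtain ⟨hc0, hc1⟩ := hc
  rw [lineAux_fract_sub hθ0 hθ1 hc0 hc1, lineAux_fract_sub hρ0 hρ1 hc0 hc1]
  constructor
  · intro h
    rcases le_or_gt c ρ with h2 | h2
    · rw [if_pos (le_trans h2 hρθ)] at h
      rw [if_pos h2]
      linarith
    · have h1 : θ < c := lt_of_not_ge fun hc' => absurd (hcρ hc') (not_le.mpr h2)
      rw [if_neg (not_le.mpr h1)] at h
      rw [if_neg (not_le.mpr h2)]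
      linarith
  · intro h
    rcases le_or_gt c ρ with h2 | h2
    · rw [if_pos h2] at h
      rw [if_pos (le_trans h2 hρθ)]
      by_contra hcon
      push_neg at hcon
      have hlt1 : c + τ < 1 := by linarith
      have hfr : Int.fract (c + τ) = c + τ := Int.fract_eq_self.mpr ⟨by linarith, hlt1⟩
      have hle := hbρ (by rw [hfr]; linarith)
      rw [hfr] at hle
      linarith
    · have h1 : θ < c := lt_of_not_ge fun hc' => absurd (hcρ hc') (not_le.mpr h2)
      rw [if_neg (not_le.mpr h2)] at h
      rw [if_neg (not_le.mpr h1)]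
      by_contra hcon
      push_neg at hcon
      have hfr : Int.fract (c + τ) = c + τ - 1 := by
        have h2' : Int.fract (c + τ - (1 : ℤ)) = Int.fract (c + τ) := Int.fract_sub_intCast _ 1
        rw [Int.cast_one] at h2'
        rw [← h2']
        exact Int.fract_eq_self.mpr ⟨by linarith, by linarith⟩
      have hle := hbρ (by rw [hfr]; linarith)
      rw [hfr] at hle
      linarith

lemma lineAux_fract_shift (θ c : ℝ) : Int.fract (θ - c) = Int.fract (θ - Int.fract c) := by
  rw [show θ - c = (θ - Int.fract c) - (⌊c⌋ : ℤ) by rw [← Int.self_sub_floor]; ring,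
    Int.fract_sub_intCast]

lemma lineAux_sum_filter {N : ℕ} (σ : ℝ → (Fin N → Bool))
    (hσ : ∀ s, MeasurableSet {θ : ℝ | σ θ = s})
    (P : (Fin N → Bool) → Prop) [DecidablePred P] :
    ∑ s ∈ Finset.univ.filter P,
        (volume {θ : ℝ | θ ∈ Set.Ico (0:ℝ) 1 ∧ σ θ = s}).toReal
      = (volume {θ : ℝ | θ ∈ Set.Ico (0:ℝ) 1 ∧ P (σ θ)}).toReal := by
  have hU : {θ : ℝ | θ ∈ Set.Ico (0:ℝ) 1 ∧ P (σ θ)}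
      = ⋃ s ∈ Finset.univ.filter P, {θ : ℝ | θ ∈ Set.Ico (0:ℝ) 1 ∧ σ θ = s} := by
    ext θ
    simp only [Set.mem_setOf_eq, Set.mem_iUnion, Finset.mem_filter, Finset.mem_univ, true_and]
    constructor
    · rintro ⟨h1, h2⟩; exact ⟨σ θ, h2, h1, rfl⟩
    · rintro ⟨s, hs, h1, rfl⟩; exact ⟨h1, hs⟩
  rw [hU, measure_biUnion_finset ?_ ?_]
  · rw [ENNReal.toReal_sum]
    intro s _
    refine ne_top_of_le_ne_top ?_ (measure_mono (fun θ hθ => hθ.1))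
    rw [Real.volume_Ico]
    exact ENNReal.ofReal_ne_top
  · intro s _ s' _ hne
    exact Set.disjoint_left.mpr fun θ h1 h2 => hne (by rw [← h1.2, ← h2.2])
  · intro s _
    exact MeasurableSet.inter measurableSet_Ico (hσ s)


end LineNetworkAux

open MeasureTheory

noncomputable def linkTime (N : ℕ) (lam : (Fin N → Bool) → ℝ) (i : ℕ) : ℝ :=
  ∑ s ∈ Finset.univ.filter (fun s : Fin N → Bool => linkActive N s i), lam s

noncomputable def rate (N : ℕ) (ℓ : ℕ → ℝ) (lam : (Fin N → Bool) → ℝ) : ℝ :=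
  (Finset.Icc 1 (N + 1)).inf' ⟨1, by simp⟩ (fun i => linkTime N lam i * ℓ i)

/-- There exists a simple schedule (support of size at most `N+1`) achieving
`min_{i ∈ [1,N]} ℓ_i ℓ_{i+1} / (ℓ_i + ℓ_{i+1})`. -/
theorem exists_simple_schedule (N : ℕ) (hN : 1 ≤ N) (ℓ : ℕ → ℝ)
    (hℓ : ∀ i ∈ Finset.Icc 1 (N + 1), 0 < ℓ i) :
    ∃ lam : (Fin N → Bool) → ℝ,
      (∀ s, 0 ≤ lam s) ∧ (∑ s, lam s) = 1 ∧
      {s : Fin N → Bool | lam s ≠ 0}.ncard ≤ N + 1 ∧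
      rate N ℓ lam =
        (Finset.Icc 1 N).inf' (Finset.nonempty_Icc.mpr hN)
          (fun i => ℓ i * ℓ (i + 1) / (ℓ i + ℓ (i + 1))) := by
  classical
  set C := (Finset.Icc 1 N).inf' (Finset.nonempty_Icc.mpr hN)
      (fun i => ℓ i * ℓ (i + 1) / (ℓ i + ℓ (i + 1))) with hC
  have hℓ' : ∀ i ∈ Finset.Icc 1 N, 0 < ℓ i ∧ 0 < ℓ (i + 1) := by
    intro i hi
    rw [Finset.mem_Icc] at hi
    exact ⟨hℓ i (Finset.mem_Icc.mpr ⟨hi.1, by omega⟩),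
      hℓ (i + 1) (Finset.mem_Icc.mpr ⟨by omega, by omega⟩)⟩
  have hCpos : 0 < C := by
    rw [hC, Finset.lt_inf'_iff]
    intro i hi
    obtain ⟨h1, h2⟩ := hℓ' i hi
    positivity
  set t : ℕ → ℝ := fun i => C / ℓ i with ht
  have htpos : ∀ i ∈ Finset.Icc 1 (N + 1), 0 < t i := fun i hi => div_pos hCpos (hℓ i hi)
  have htmul : ∀ i ∈ Finset.Icc 1 (N + 1), t i * ℓ i = C := fun i hi =>
    div_mul_cancel₀ C (ne_of_gt (hℓ i hi))
  have hsum : ∀ i ∈ Finset.Icc 1 N, t i + t (i + 1) ≤ 1 := by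
    intro i hi
    obtain ⟨ha, hb⟩ := hℓ' i hi
    have hC_le : C ≤ ℓ i * ℓ (i + 1) / (ℓ i + ℓ (i + 1)) := by
      conv_lhs => rw [hC]
      exact Finset.inf'_le _ hi
    rw [le_div_iff₀ (by positivity)] at hC_le
    show C / ℓ i + C / ℓ (i + 1) ≤ 1
    rw [div_add_div _ _ (ne_of_gt ha) (ne_of_gt hb), div_le_one (by positivity)]
    nlinarith
  have htlt : ∀ i ∈ Finset.Icc 1 N, t i < 1 := by
    intro i hi
    have h2 := htpos (i + 1) (by rw [Finset.mem_Icc] at hi ⊢; omega)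
    have := hsum i hi
    linarith
  set x : ℕ → ℝ := fun j => ∑ i ∈ Finset.Icc 1 j, t i with hx
  have hx0 : x 0 = 0 := by
    show ∑ i ∈ Finset.Icc 1 0, t i = 0
    rw [Finset.Icc_eq_empty (by omega : ¬ (1:ℕ) ≤ 0), Finset.sum_empty]
  have hxstep : ∀ j : ℕ, x (j + 1) = x j + t (j + 1) := by
    intro j
    exact Finset.sum_Icc_succ_top (by omega) _
  set σ : ℝ → (Fin N → Bool) :=
    fun θ k => decide (t (k.1 + 1) ≤ Int.fract (θ - x k.1)) with hσ
  have hσtrue : ∀ θ (k : Fin N), (σ θ k = true ↔ t (k.1 + 1) ≤ Int.fract (θ - x k.1)) := by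
    intro θ k; simp [hσ]
  have hσfalse : ∀ θ (k : Fin N), (σ θ k = false ↔ Int.fract (θ - x k.1) < t (k.1 + 1)) := by
    intro θ k; simp [hσ]
  have hσmeas : ∀ s, MeasurableSet {θ : ℝ | σ θ = s} := by
    intro s
    have hre : {θ : ℝ | σ θ = s} = ⋂ k : Fin N, {θ : ℝ | σ θ k = s k} := by
      ext θ; simp [funext_iff]
    rw [hre]
    refine MeasurableSet.iInter fun k => ?_
    have hm : Measurable fun θ : ℝ => Int.fract (θ - x k.1) :=
      measurable_fract.comp (measurable_id.sub_const _)
    rcases Bool.eq_false_or_eq_true (s k) with hb | hb <;> rw [hb]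
    · have he : {θ : ℝ | σ θ k = true} = {θ : ℝ | t (k.1 + 1) ≤ Int.fract (θ - x k.1)} :=
        Set.ext fun θ => hσtrue θ k
      rw [he]
      exact measurableSet_le measurable_const hm
    · have he : {θ : ℝ | σ θ k = false} = {θ : ℝ | Int.fract (θ - x k.1) < t (k.1 + 1)} :=
        Set.ext fun θ => hσfalse θ k
      rw [he]
      exact measurableSet_lt hm measurable_const
  set lam : (Fin N → Bool) → ℝ :=
    fun s => (volume {θ : ℝ | θ ∈ Set.Ico (0:ℝ) 1 ∧ σ θ = s}).toReal with hlam
  have hkey : ∀ (P : (Fin N → Bool) → Prop) (inst : DecidablePred P),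
      ∑ s ∈ Finset.univ.filter P, lam s
        = (volume {θ : ℝ | θ ∈ Set.Ico (0:ℝ) 1 ∧ P (σ θ)}).toReal := by
    intro P inst
    exact lineAux_sum_filter σ hσmeas P
  have hLT : ∀ i, linkTime N lam i
      = (volume {θ : ℝ | θ ∈ Set.Ico (0:ℝ) 1 ∧ linkActive N (σ θ) i}).toReal := by
    intro i
    rw [linkTime]
    exact hkey (fun s => linkActive N s i) _
  have hτbound : ∀ k : Fin N, 0 < t (k.1 + 1) ∧ t (k.1 + 1) < 1 := by
    intro k
    have hk := k.2
    exact ⟨htpos _ (Finset.mem_Icc.mpr ⟨by omega, by omega⟩),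
      htlt _ (Finset.mem_Icc.mpr ⟨by omega, by omega⟩)⟩
  -- link 1
  have hlt1 : linkTime N lam 1 = t 1 := by
    rw [hLT 1]
    have hact1 : ∀ s : Fin N → Bool, linkActive N s 1 ↔ s ⟨0, hN⟩ = false := by
      intro s
      simp [linkActive, nodeState, show 0 < N from hN]
    have hev : {θ : ℝ | θ ∈ Set.Ico (0:ℝ) 1 ∧ linkActive N (σ θ) 1}
        = {θ : ℝ | θ ∈ Set.Ico (0:ℝ) 1 ∧ Int.fract (θ - x 0) < t 1} := by
      ext θ
      simp only [Set.mem_setOf_eq, hact1 (σ θ), hσfalse θ ⟨0, hN⟩]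
    rw [hev, lineAux_vol_window (x 0) (t 1)
      (le_of_lt (htpos 1 (Finset.mem_Icc.mpr ⟨le_refl 1, by omega⟩)))
      (le_of_lt (htlt 1 (Finset.mem_Icc.mpr ⟨le_refl 1, hN⟩)))]
    exact ENNReal.toReal_ofReal (le_of_lt (htpos 1 (Finset.mem_Icc.mpr ⟨le_refl 1, by omega⟩)))
  -- middle links
  have hltmid : ∀ m : ℕ, m + 2 ≤ N → linkTime N lam (m + 2) = t (m + 2) := by
    intro m hm
    rw [hLT]
    have hmlt : m < N := by omega
    have hm1lt : m + 1 < N := by omega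
    have hact : ∀ s : Fin N → Bool,
        linkActive N s (m + 2) ↔ (s ⟨m, hmlt⟩ = true ∧ s ⟨m + 1, hm1lt⟩ = false) := by
      intro s
      simp [linkActive, nodeState, hmlt, hm1lt]
    have hev : {θ : ℝ | θ ∈ Set.Ico (0:ℝ) 1 ∧ linkActive N (σ θ) (m + 2)}
        = {θ : ℝ | θ ∈ Set.Ico (0:ℝ) 1 ∧ Int.fract (θ - x (m + 1)) < t (m + 2)} := by
      ext θ
      simp only [Set.mem_setOf_eq, hact (σ θ), hσtrue θ ⟨m, hmlt⟩, hσfalse θ ⟨m + 1, hm1lt⟩]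
      constructor
      · rintro ⟨h1, _, h3⟩; exact ⟨h1, h3⟩
      · rintro ⟨h1, h3⟩
        refine ⟨h1, ?_, h3⟩
        have h3' : Int.fract (θ - (x m + t (m + 1))) < t (m + 2) := by
          rw [← hxstep m]; exact h3
        exact lineAux_window_imp (x m) (t (m + 1)) (t (m + 2)) θ
          (le_of_lt (htpos (m + 1) (Finset.mem_Icc.mpr ⟨by omega, by omega⟩)))
          (le_of_lt (htpos (m + 2) (Finset.mem_Icc.mpr ⟨by omega, by omega⟩)))
          (hsum (m + 1) (Finset.mem_Icc.mpr ⟨by omega, by omega⟩)) h3'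
    rw [hev, lineAux_vol_window (x (m + 1)) (t (m + 2))
      (le_of_lt (htpos (m + 2) (Finset.mem_Icc.mpr ⟨by omega, by omega⟩)))
      (le_of_lt (htlt (m + 2) (Finset.mem_Icc.mpr ⟨by omega, by omega⟩)))]
    exact ENNReal.toReal_ofReal
      (le_of_lt (htpos (m + 2) (Finset.mem_Icc.mpr ⟨by omega, by omega⟩)))
  -- last link
  have hltN : linkTime N lam (N + 1) = 1 - t N := by
    rw [hLT]
    have hnlt : N - 1 < N := by omega
    have hNeq : N - 1 + 1 = N := by omega
    have hact : ∀ s : Fin N → Bool, linkActive N s (N + 1) ↔ s ⟨N - 1, hnlt⟩ = true := by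
      intro s
      simp [linkActive, nodeState, hnlt, show ¬ N = 0 by omega, show ¬ N < N by omega]
    have h0t : 0 ≤ t N := le_of_lt (htpos N (Finset.mem_Icc.mpr ⟨hN, by omega⟩))
    have h1t : t N ≤ 1 := le_of_lt (htlt N (Finset.mem_Icc.mpr ⟨hN, le_refl N⟩))
    have hev : {θ : ℝ | θ ∈ Set.Ico (0:ℝ) 1 ∧ linkActive N (σ θ) (N + 1)}
        = Set.Ico (0:ℝ) 1 \ {θ : ℝ | θ ∈ Set.Ico (0:ℝ) 1 ∧ Int.fract (θ - x (N - 1)) < t N} := by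
      ext θ
      have hσt := hσtrue θ ⟨N - 1, hnlt⟩
      rw [hNeq] at hσt
      simp only [Set.mem_setOf_eq, hact (σ θ), hσt, Set.mem_diff, Set.mem_setOf_eq]
      constructor
      · rintro ⟨h1, h2⟩; exact ⟨h1, fun hc => absurd hc.2 (not_lt.mpr h2)⟩
      · rintro ⟨h1, h2⟩; exact ⟨h1, not_lt.mp fun hc => h2 ⟨h1, hc⟩⟩
    have hmW : MeasurableSet {θ : ℝ | θ ∈ Set.Ico (0:ℝ) 1 ∧ Int.fract (θ - x (N - 1)) < t N} :=
      MeasurableSet.inter measurableSet_Ico (measurableSet_lt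
        (measurable_fract.comp (measurable_id.sub_const _)) measurable_const)
    have hfW : volume {θ : ℝ | θ ∈ Set.Ico (0:ℝ) 1 ∧ Int.fract (θ - x (N - 1)) < t N} ≠ ⊤ := by
      rw [lineAux_vol_window _ _ h0t h1t]; exact ENNReal.ofReal_ne_top
    rw [hev, measure_diff (fun θ hθ => hθ.1) hmW.nullMeasurableSet hfW]
    rw [lineAux_vol_window _ _ h0t h1t, Real.volume_Ico, show (1:ℝ) - 0 = 1 by ring,
      ← ENNReal.ofReal_sub _ h0t]
    exact ENNReal.toReal_ofReal (by linarith)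
  -- the rate
  have hrate : rate N ℓ lam = C := by
    rw [rate]
    apply le_antisymm
    · refine le_trans (Finset.inf'_le _ (Finset.mem_Icc.mpr ⟨le_refl 1, by omega⟩)) ?_
      rw [hlt1, htmul 1 (Finset.mem_Icc.mpr ⟨le_refl 1, by omega⟩)]
    · apply Finset.le_inf'
      intro i hi
      rw [Finset.mem_Icc] at hi
      by_cases hi1 : i = 1
      · subst hi1
        rw [hlt1, htmul 1 (Finset.mem_Icc.mpr ⟨le_refl 1, by omega⟩)]
      · by_cases hiN : i = N + 1
        · subst hiN
          rw [hltN]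
          have h1 : t N + t (N + 1) ≤ 1 := hsum N (Finset.mem_Icc.mpr ⟨hN, le_refl N⟩)
          have h2 : t (N + 1) * ℓ (N + 1) = C :=
            htmul (N + 1) (Finset.mem_Icc.mpr ⟨by omega, le_refl _⟩)
          have h3 : 0 < ℓ (N + 1) := hℓ (N + 1) (Finset.mem_Icc.mpr ⟨by omega, le_refl _⟩)
          have h4 : 0 < t (N + 1) := htpos (N + 1) (Finset.mem_Icc.mpr ⟨by omega, le_refl _⟩)
          nlinarith
        · obtain ⟨m, rfl⟩ : ∃ m, i = m + 2 := ⟨i - 2, by omega⟩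
          rw [hltmid m (by omega), htmul (m + 2) (Finset.mem_Icc.mpr ⟨by omega, by omega⟩)]
  -- support
  have hsupp : {s : Fin N → Bool | lam s ≠ 0}.ncard ≤ N + 1 := by
    set B : Finset ℝ := (Finset.range (N + 1)).image (fun j => Int.fract (x j)) with hB
    have hB0 : (0:ℝ) ∈ B := by
      rw [hB]
      refine Finset.mem_image.mpr ⟨0, Finset.mem_range.mpr (by omega), ?_⟩
      rw [hx0, Int.fract_zero]
    have hclaim : ∀ θ ∈ Set.Ico (0:ℝ) 1, ∃ ρ, ρ ∈ (B : Set ℝ) ∧ σ θ = σ ρ := by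
      intro θ hθ
      have hFne : (B.filter (· ≤ θ)).Nonempty := ⟨0, Finset.mem_filter.mpr ⟨hB0, hθ.1⟩⟩
      obtain ⟨ρ, hρdef⟩ : ∃ ρ, ρ = (B.filter (· ≤ θ)).max' hFne := ⟨_, rfl⟩
      have hρmem := Finset.max'_mem _ hFne
      rw [← hρdef, Finset.mem_filter] at hρmem
      have hρB : ρ ∈ B := hρmem.1
      have hρθ : ρ ≤ θ := hρmem.2
      have hmax : ∀ b ∈ B, b ≤ θ → b ≤ ρ := by
        intro b hb hbθ
        have hbF : b ∈ B.filter (· ≤ θ) := Finset.mem_filter.mpr ⟨hb, hbθ⟩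
        rw [hρdef]
        exact (B.filter (· ≤ θ)).le_max' b hbF
      have hρIco : ρ ∈ Set.Ico (0:ℝ) 1 := ⟨hmax 0 hB0 hθ.1, lt_of_le_of_lt hρθ hθ.2⟩
      refine ⟨ρ, hρB, ?_⟩
      funext k
      have hk2 := k.2
      have hcB : Int.fract (x k.1) ∈ B :=
        Finset.mem_image.mpr ⟨k.1, Finset.mem_range.mpr (by omega), rfl⟩
      have hbB : Int.fract (Int.fract (x k.1) + t (k.1 + 1)) ∈ B := by
        have heq : Int.fract (Int.fract (x k.1) + t (k.1 + 1)) = Int.fract (x (k.1 + 1)) := by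
          rw [hxstep k.1,
            show x k.1 + t (k.1 + 1) = (Int.fract (x k.1) + t (k.1 + 1)) + (⌊x k.1⌋ : ℤ) by
              rw [← Int.self_sub_floor]; ring, Int.fract_add_intCast]
        rw [heq]
        exact Finset.mem_image.mpr ⟨k.1 + 1, Finset.mem_range.mpr (by omega), rfl⟩
      have hiff := lineAux_window_iff θ ρ (Int.fract (x k.1)) (t (k.1 + 1)) hθ hρIco hρθ
        ⟨Int.fract_nonneg _, Int.fract_lt_one _⟩ (hτbound k).1 (hτbound k).2
        (hmax _ hcB) (hmax _ hbB)
      have hiff2 : (σ θ k = true) ↔ (σ ρ k = true) := by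
        rw [hσtrue θ k, hσtrue ρ k, lineAux_fract_shift θ (x k.1),
          lineAux_fract_shift ρ (x k.1), ← not_lt, ← not_lt]
        exact not_congr hiff
      exact Bool.eq_iff_iff.mpr hiff2
    have hsub : {s : Fin N → Bool | lam s ≠ 0} ⊆ σ '' (B : Set ℝ) := by
      intro s hs
      have hvol : volume {θ : ℝ | θ ∈ Set.Ico (0:ℝ) 1 ∧ σ θ = s} ≠ 0 := by
        intro h
        exact hs (by rw [hlam]; simp only; rw [h, ENNReal.toReal_zero])
      obtain ⟨θ, hθ⟩ := nonempty_of_measure_ne_zero hvol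
      obtain ⟨ρ, hρB, hρeq⟩ := hclaim θ hθ.1
      exact ⟨ρ, hρB, by rw [← hρeq, hθ.2]⟩
    calc {s : Fin N → Bool | lam s ≠ 0}.ncard
        ≤ (σ '' (B : Set ℝ)).ncard :=
          Set.ncard_le_ncard hsub ((B.finite_toSet).image _)
      _ ≤ (B : Set ℝ).ncard := Set.ncard_image_le B.finite_toSet
      _ = B.card := Set.ncard_coe_finset B
      _ ≤ N + 1 := le_trans Finset.card_image_le (by simp)
  -- sum to one
  have hsum1 : ∑ s, lam s = 1 := by
    have h1 : ∑ s, lam s = ∑ s ∈ Finset.univ.filter (fun _ : Fin N → Bool => True), lam s := by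
      simp
    rw [h1, hkey (fun _ => True) (fun _ => inferInstance)]
    have h2 : {θ : ℝ | θ ∈ Set.Ico (0:ℝ) 1 ∧ True} = Set.Ico (0:ℝ) 1 := by ext θ; simp
    rw [h2, Real.volume_Ico]
    norm_num
  exact ⟨lam, fun s => ENNReal.toReal_nonneg, hsum1, hsupp, hrate⟩
end

section
/- For every integer N ≥ 1, all positive real link capacities ℓ_1, …, ℓ_{N+1}, and every schedule λ, the rate satisfies C^λ ≤ min_{i∈{1,…,N}} ℓ_i·ℓ_{i+1}/(ℓ_i + ℓ_{i+1}). -/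
open Finset

/-- Every schedule has rate at most `min_{i ∈ [1,N]} ℓ_i ℓ_{i+1} / (ℓ_i + ℓ_{i+1})`. -/
theorem rate_le_closed_form (N : ℕ) (hN : 1 ≤ N) (ℓ : ℕ → ℝ)
    (hℓ : ∀ i ∈ Finset.Icc 1 (N + 1), 0 < ℓ i)
    (lam : (Fin N → Bool) → ℝ) (hlam : ∀ s, 0 ≤ lam s) (hsum : (∑ s, lam s) = 1) :
    rate N ℓ lam ≤
      (Finset.Icc 1 N).inf' (Finset.nonempty_Icc.mpr hN)
        (fun i => ℓ i * ℓ (i + 1) / (ℓ i + ℓ (i + 1))) := by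
  apply Finset.le_inf'
  intro i hi
  rw [Finset.mem_Icc] at hi
  obtain ⟨hi1, hiN⟩ := hi
  have hmem1 : i ∈ Finset.Icc 1 (N + 1) := Finset.mem_Icc.mpr ⟨hi1, by omega⟩
  have hmem2 : i + 1 ∈ Finset.Icc 1 (N + 1) := Finset.mem_Icc.mpr ⟨by omega, by omega⟩
  have hℓ1 : 0 < ℓ i := hℓ i hmem1
  have hℓ2 : 0 < ℓ (i + 1) := hℓ (i + 1) hmem2
  have hr1 : rate N ℓ lam ≤ linkTime N lam i * ℓ i := Finset.inf'_le _ hmem1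
  have hr2 : rate N ℓ lam ≤ linkTime N lam (i + 1) * ℓ (i + 1) := Finset.inf'_le _ hmem2
  -- the two link-time sets are disjoint
  have hdisj : Disjoint
      (Finset.univ.filter (fun s : Fin N → Bool => linkActive N s i))
      (Finset.univ.filter (fun s : Fin N → Bool => linkActive N s (i + 1))) := by
    rw [Finset.disjoint_filter]
    intro s _ h1 h2
    have e1 : nodeState N s i = false := h1.2
    have e2 : nodeState N s (i + 1 - 1) = true := h2.1
    simp only [Nat.add_sub_cancel] at e2
    rw [e1] at e2
    exact Bool.false_ne_true e2
  have hsumle : linkTime N lam i + linkTime N lam (i + 1) ≤ 1 := by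
    unfold linkTime
    rw [← Finset.sum_union hdisj, ← hsum]
    exact Finset.sum_le_sum_of_subset_of_nonneg (Finset.subset_univ _)
      (fun s _ _ => hlam s)
  have ht1 : 0 ≤ linkTime N lam i :=
    Finset.sum_nonneg (fun s _ => hlam s)
  have ht2 : 0 ≤ linkTime N lam (i + 1) :=
    Finset.sum_nonneg (fun s _ => hlam s)
  rw [le_div_iff₀ (by positivity)]
  nlinarith [mul_le_mul_of_nonneg_right hr1 hℓ2.le,
    mul_le_mul_of_nonneg_right hr2 hℓ1.le,
    mul_le_mul_of_nonneg_right hsumle (mul_pos hℓ1 hℓ2).le]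
end

section
/- Let N ≥ 1 be an integer and let ℓ_1, …, ℓ_{N+1} be positive integers. Let M be a common multiple of ℓ_1, …, ℓ_{N+1}, set n_i = M/ℓ_i for i ∈ {1,…,N+1}, and set Δ = max_{i∈{1,…,N}} (n_i + n_{i+1}). Then there exists a schedule λ whose support {s : λ_s ≠ 0} has at most N+1 elements such that for every i ∈ {1,…,N+1}, Σ_{s∈S_i} λ_s = n_i/Δ. -/
open Finset

namespace HDX

/-! ### Integer circle arithmetic helpers -/

lemma emod_sub_self_emod (a b n : ℤ) : (a % n - b) % n = (a - b) % n := by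
  rw [Int.sub_emod, Int.emod_emod_of_dvd _ dvd_rfl, ← Int.sub_emod]

lemma emod_neg_case (D y : ℤ) (h1 : -D < y) (h2 : y < 0) : y % D = y + D := by
  have hD : 0 < D := by omega
  have h : (y + D) % D = y % D := by
    simpa using Int.add_mul_emod_self_left (a := y) (b := D) (c := 1)
  rw [← h, Int.emod_eq_of_lt (by omega) (by omega)]

lemma emod_sub_both (a b r D : ℤ) : ((a-r)%D - (b-r)%D) % D = (a-b) % D := by
  rw [← Int.sub_emod]; ring_nf

lemma int_aux (D y z : ℤ) (hy1 : -D < y) (hy2 : y < D) (hz0 : 0 ≤ z) (hzD : z < D)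
    (hz : y % D = z) : y = z ∨ y = z - D := by
  have hD : 0 < D := lt_of_le_of_lt hz0 hzD
  rcases le_or_gt 0 y with h | h
  · left; rw [← hz, Int.emod_eq_of_lt h hy2]
  · right
    have h1 : (y + D) % D = y % D := by
      simpa using Int.add_mul_emod_self_left (a := y) (b := D) (c := 1)
    have h2 : (y + D) % D = y + D := Int.emod_eq_of_lt (by omega) (by omega)
    omega

/-- If `p b < p x ≤ p t` (positions around the circle measured from `r`)
and `0 ≤ b ≤ t < D`, `0 ≤ x < D`, then `b < x ≤ t`. -/
lemma circ_between (D b t x r : ℤ) (hD : 0 < D) (hb0 : 0 ≤ b) (hbt : b ≤ t) (htD : t < D)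
    (hx0 : 0 ≤ x) (hxD : x < D)
    (h1 : (b - r) % D < (x - r) % D) (h2 : (x - r) % D ≤ (t - r) % D) :
    b < x ∧ x ≤ t := by
  set pb := (b - r) % D with hpb
  set px := (x - r) % D with hpx
  set pt := (t - r) % D with hpt
  have hDne : D ≠ 0 := by omega
  have hb' : 0 ≤ pb := Int.emod_nonneg _ hDne
  have hbD : pb < D := Int.emod_lt_of_pos _ hD
  have hx' : 0 ≤ px := Int.emod_nonneg _ hDne
  have hxD' : px < D := Int.emod_lt_of_pos _ hD
  have ht' : 0 ≤ pt := Int.emod_nonneg _ hDne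
  have htD' : pt < D := Int.emod_lt_of_pos _ hD
  have e1 : (t - b) % D = (pt - pb) % D := (emod_sub_both t b r D).symm
  have e2 : (x - b) % D = (px - pb) % D := (emod_sub_both x b r D).symm
  have e3 : (t - x) % D = (pt - px) % D := (emod_sub_both t x r D).symm
  have f1 : t - b = pt - pb ∨ t - b = pt - pb - D := by
    rcases int_aux D (pt - pb) ((pt - pb) % D) (by omega) (by omega)
      (Int.emod_nonneg _ hDne) (Int.emod_lt_of_pos _ hD) rfl with h | h <;>
    · rcases int_aux D (t - b) ((pt - pb) % D) (by omega) (by omega)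
        (Int.emod_nonneg _ hDne) (Int.emod_lt_of_pos _ hD) e1 with h' | h' <;> omega
  have f2 : x - b = px - pb ∨ x - b = px - pb + D := by
    rcases int_aux D (px - pb) ((px - pb) % D) (by omega) (by omega)
      (Int.emod_nonneg _ hDne) (Int.emod_lt_of_pos _ hD) rfl with h | h <;>
    · rcases int_aux D (x - b) ((px - pb) % D) (by omega) (by omega)
        (Int.emod_nonneg _ hDne) (Int.emod_lt_of_pos _ hD) e2 with h' | h' <;> omega
  have f3 : t - x = pt - px ∨ t - x = pt - px + D ∨ t - x = pt - px - D := by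
    rcases int_aux D (pt - px) ((pt - px) % D) (by omega) (by omega)
      (Int.emod_nonneg _ hDne) (Int.emod_lt_of_pos _ hD) rfl with h | h <;>
    · rcases int_aux D (t - x) ((pt - px) % D) (by omega) (by omega)
        (Int.emod_nonneg _ hDne) (Int.emod_lt_of_pos _ hD) e3 with h' | h' <;> omega
  omega

/-- Wraparound variant: if `p t < p b` and `p x ≤ p t` then `b < x ≤ t`. -/
lemma circ_between' (D b t x r : ℤ) (hD : 0 < D) (hb0 : 0 ≤ b) (hbt : b ≤ t) (htD : t < D)
    (hx0 : 0 ≤ x) (hxD : x < D)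
    (h1 : (t - r) % D < (b - r) % D) (h2 : (x - r) % D ≤ (t - r) % D) :
    b < x ∧ x ≤ t := by
  set pb := (b - r) % D with hpb
  set px := (x - r) % D with hpx
  set pt := (t - r) % D with hpt
  have hDne : D ≠ 0 := by omega
  have hb' : 0 ≤ pb := Int.emod_nonneg _ hDne
  have hbD : pb < D := Int.emod_lt_of_pos _ hD
  have hx' : 0 ≤ px := Int.emod_nonneg _ hDne
  have hxD' : px < D := Int.emod_lt_of_pos _ hD
  have ht' : 0 ≤ pt := Int.emod_nonneg _ hDne
  have htD' : pt < D := Int.emod_lt_of_pos _ hD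
  have e1 : (t - b) % D = (pt - pb) % D := (emod_sub_both t b r D).symm
  have e2 : (x - b) % D = (px - pb) % D := (emod_sub_both x b r D).symm
  have e3 : (t - x) % D = (pt - px) % D := (emod_sub_both t x r D).symm
  have f1 : t - b = pt - pb ∨ t - b = pt - pb + D := by
    rcases int_aux D (pt - pb) ((pt - pb) % D) (by omega) (by omega)
      (Int.emod_nonneg _ hDne) (Int.emod_lt_of_pos _ hD) rfl with h | h <;>
    · rcases int_aux D (t - b) ((pt - pb) % D) (by omega) (by omega)
        (Int.emod_nonneg _ hDne) (Int.emod_lt_of_pos _ hD) e1 with h' | h' <;> omega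
  have f2 : x - b = px - pb ∨ x - b = px - pb + D ∨ x - b = px - pb - D := by
    rcases int_aux D (px - pb) ((px - pb) % D) (by omega) (by omega)
      (Int.emod_nonneg _ hDne) (Int.emod_lt_of_pos _ hD) rfl with h | h <;>
    · rcases int_aux D (x - b) ((px - pb) % D) (by omega) (by omega)
        (Int.emod_nonneg _ hDne) (Int.emod_lt_of_pos _ hD) e2 with h' | h' <;> omega
  have f3 : t - x = pt - px ∨ t - x = pt - px + D ∨ t - x = pt - px - D := by
    rcases int_aux D (pt - px) ((pt - px) % D) (by omega) (by omega)
      (Int.emod_nonneg _ hDne) (Int.emod_lt_of_pos _ hD) rfl with h | h <;>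
    · rcases int_aux D (t - x) ((pt - px) % D) (by omega) (by omega)
        (Int.emod_nonneg _ hDne) (Int.emod_lt_of_pos _ hD) e3 with h' | h' <;> omega
  omega

/-- The number of integer points of `[0, D)` on a circular arc of length `m`. -/
lemma card_arc (D : ℕ) (hD : 0 < D) (r : ℤ) (m : ℕ) (hm : m ≤ D) :
    ((Finset.range D).filter (fun t : ℕ => ((t:ℤ) - r) % (D:ℤ) < (m:ℤ))).card = m := by
  have hD' : (0:ℤ) < (D:ℤ) := by exact_mod_cast hD
  have key : ((Finset.range D).filter (fun t : ℕ => ((t:ℤ) - r) % (D:ℤ) < (m:ℤ))).card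
      = (Finset.range m).card := by
    refine Finset.card_nbij' (i := fun t => (((t:ℤ) - r) % (D:ℤ)).toNat)
      (j := fun k => ((r + (k:ℤ)) % (D:ℤ)).toNat) ?_ ?_ ?_ ?_
    · intro t ht
      simp only [Finset.mem_coe, Finset.mem_filter, Finset.mem_range] at ht ⊢
      have h0 := Int.emod_nonneg ((t:ℤ) - r) (by positivity : (D:ℤ) ≠ 0)
      omega
    · intro k hk
      simp only [Finset.mem_coe, Finset.mem_filter, Finset.mem_range] at hk ⊢
      have h0 := Int.emod_nonneg (r + (k:ℤ)) (by positivity : (D:ℤ) ≠ 0)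
      have h1 := Int.emod_lt_of_pos (r + (k:ℤ)) hD'
      constructor
      · omega
      · have : ((((r + (k:ℤ)) % (D:ℤ)).toNat : ℤ) - r) % (D:ℤ) = (k:ℤ) % (D:ℤ) := by
          rw [Int.toNat_of_nonneg h0, emod_sub_self_emod]
          simp
        rw [this, Int.emod_eq_of_lt (by positivity) (by exact_mod_cast lt_of_lt_of_le hk hm)]
        exact_mod_cast hk
    · intro t ht
      simp only [Finset.mem_coe, Finset.mem_filter, Finset.mem_range] at ht
      have h0 := Int.emod_nonneg ((t:ℤ) - r) (by positivity : (D:ℤ) ≠ 0)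
      have : (r + ((((t:ℤ) - r) % (D:ℤ)).toNat : ℤ)) % (D:ℤ) = (t:ℤ) % (D:ℤ) := by
        rw [Int.toNat_of_nonneg h0, Int.add_emod, Int.emod_emod_of_dvd _ dvd_rfl,
          ← Int.add_emod]
        ring_nf
      simp only []
      rw [this, Int.emod_eq_of_lt (by positivity) (by exact_mod_cast ht.1)]
      simp
    · intro k hk
      simp only [Finset.mem_coe, Finset.mem_range] at hk
      have h0 := Int.emod_nonneg (r + (k:ℤ)) (by positivity : (D:ℤ) ≠ 0)
      have : ((((r + (k:ℤ)) % (D:ℤ)).toNat : ℤ) - r) % (D:ℤ) = (k:ℤ) % (D:ℤ) := by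
        rw [Int.toNat_of_nonneg h0, emod_sub_self_emod]; simp
      simp only []
      rw [this, Int.emod_eq_of_lt (by positivity) (by exact_mod_cast lt_of_lt_of_le hk hm)]
      simp
  simpa using key

/-! ### The schedule construction -/

/-- Cumulative sums `c i = n 1 + ⋯ + n i`. -/
def cc (n : ℕ → ℕ) (i : ℕ) : ℕ := ∑ k ∈ Finset.range i, n (k+1)

lemma cc_sub_one (n : ℕ → ℕ) (i : ℕ) (hi : 1 ≤ i) : cc n i = cc n (i-1) + n i := by
  obtain ⟨m, rfl⟩ : ∃ m, i = m + 1 := ⟨i - 1, by omega⟩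
  simpa [cc] using Finset.sum_range_succ (fun k => n (k+1)) m

/-- Time `t` belongs to the arc `I_i = [c_{i-1}, c_i) (mod D)`. -/
abbrev inII (n : ℕ → ℕ) (D : ℕ) (i : ℕ) (t : ℤ) : Prop :=
  (t - (cc n (i-1) : ℤ)) % (D:ℤ) < (n i : ℤ)

instance hack (N : ℕ) (n : ℕ → ℕ) (D : ℕ) (t : ℤ) (j : ℕ) :
    Decidable (¬inII n D j t ∧
      ∃ j' ∈ Finset.Icc 1 (N + 1), j < j' ∧ inII n D j' t) := by
  infer_instance

/-- The state at time `t` : relay `k+1` transmits iff it does not lie in its receiving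
arc and some later arc is active. -/
def stOf (N : ℕ) (n : ℕ → ℕ) (D : ℕ) (t : ℤ) : Fin N → Bool := fun k =>
  decide (¬ inII n D ((k:ℕ)+1) t ∧
    ∃ j ∈ Finset.Icc 1 (N+1), (k:ℕ)+1 < j ∧ inII n D j t)

section Main

variable (N : ℕ) (n : ℕ → ℕ) (D : ℕ)

lemma nodeState_stOf (t : ℤ) (j : ℕ) (hj1 : 1 ≤ j) (hj2 : j ≤ N) :
    nodeState N (stOf N n D t) j =
      decide (¬ inII n D j t ∧ ∃ j' ∈ Finset.Icc 1 (N+1), j < j' ∧ inII n D j' t) := by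
  obtain ⟨m, rfl⟩ : ∃ m, j = m+1 := ⟨j-1, by omega⟩
  have hm : m < N := by omega
  simp [nodeState, stOf, hm]

lemma nodeState_zero (s : Fin N → Bool) : nodeState N s 0 = true := by simp [nodeState]

lemma nodeState_top (s : Fin N → Bool) : nodeState N s (N+1) = false := by
  simp [nodeState]

variable (hN : 1 ≤ N) (hn1 : ∀ i ∈ Finset.Icc 1 (N+1), 1 ≤ n i)
  (hsum : ∀ j ∈ Finset.Icc 1 N, n j + n (j+1) ≤ D)

include hN hn1 hsum

lemma hDpos : 0 < D := by
  have h1 := hn1 1 (by simp only [Finset.mem_Icc]; omega)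
  have := hsum 1 (by simp only [Finset.mem_Icc]; omega)
  omega

lemma hnlt : ∀ i ∈ Finset.Icc 1 (N+1), n i < D := by
  intro i hi
  simp only [Finset.mem_Icc] at hi
  rcases Nat.lt_or_ge i (N+1) with h | h
  · have := hsum i (by simp only [Finset.mem_Icc]; omega)
    have := hn1 (i+1) (by simp only [Finset.mem_Icc]; omega)
    omega
  · have hiN : i = N + 1 := by omega
    subst hiN
    have := hsum N (by simp only [Finset.mem_Icc]; omega)
    have := hn1 N (by simp only [Finset.mem_Icc]; omega)
    omega

/-- Every time `t ∈ [0, D)` lies on some arc. -/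
lemma cover (hDle : D ≤ cc n (N+1)) (t : ℤ) (h0 : 0 ≤ t) (h1 : t < D) :
    ∃ i, 1 ≤ i ∧ i ≤ N+1 ∧ inII n D i t := by
  have hex : ∃ i, t < (cc n i : ℤ) :=
    ⟨N+1, lt_of_lt_of_le h1 (by exact_mod_cast hDle)⟩
  classical
  refine ⟨Nat.find hex, ?_, Nat.find_le (lt_of_lt_of_le h1 (by exact_mod_cast hDle)), ?_⟩
  · rw [Nat.one_le_iff_ne_zero]
    intro h
    have hspec : t < (cc n (Nat.find hex) : ℤ) := Nat.find_spec hex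
    rw [h] at hspec
    simp [cc] at hspec
    omega
  · have hspec : t < (cc n (Nat.find hex) : ℤ) := Nat.find_spec hex
    have hpos : 1 ≤ Nat.find hex := by
      rw [Nat.one_le_iff_ne_zero]
      intro h
      rw [h] at hspec
      simp [cc] at hspec
      omega
    have hlow : (cc n (Nat.find hex - 1) : ℤ) ≤ t := by
      by_contra h
      push_neg at h
      exact Nat.find_min hex (by omega) h
    have hle : Nat.find hex ≤ N + 1 := Nat.find_le (lt_of_lt_of_le h1 (by exact_mod_cast hDle))
    have hcc : cc n (Nat.find hex) = cc n (Nat.find hex - 1) + n (Nat.find hex) :=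
      cc_sub_one n _ hpos
    have hnD : n (Nat.find hex) < D :=
      hnlt N n D hN hn1 hsum _ (by simp only [Finset.mem_Icc]; omega)
    unfold inII
    rw [Int.emod_eq_of_lt (by omega) (by rw [hcc] at hspec; push_cast at hspec ⊢; omega)]
    rw [hcc] at hspec; push_cast at hspec ⊢; omega

/-- Consecutive arcs are disjoint. -/
lemma not_consec (i : ℕ) (hi : i ∈ Finset.Icc 1 N) (t : ℤ) :
    ¬ (inII n D i t ∧ inII n D (i+1) t) := by
  rintro ⟨h1, h2⟩
  simp only [Finset.mem_Icc] at hi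
  have hDp : 0 < D := hDpos N n D hN hn1 hsum
  have hniD : n i < D := hnlt N n D hN hn1 hsum i (by simp only [Finset.mem_Icc]; omega)
  have hs := hsum i (by simp only [Finset.mem_Icc]; omega)
  unfold inII at h1 h2
  simp only [Nat.add_sub_cancel] at h2
  have hcc : cc n i = cc n (i-1) + n i := cc_sub_one n i (by omega)
  set a := (t - (cc n (i-1) : ℤ)) % (D:ℤ) with ha
  have ha0 : 0 ≤ a := Int.emod_nonneg _ (by positivity)
  have key : (t - (cc n i : ℤ)) % (D:ℤ) = a - n i + D := by
    have e1 : (t - (cc n i : ℤ)) % (D:ℤ) = (a - n i) % (D:ℤ) := by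
      rw [ha, emod_sub_self_emod]
      congr 1
      rw [hcc]; push_cast; ring
    rw [e1, emod_neg_case (D:ℤ) _ (by push_cast; omega) (by omega)]
  rw [key] at h2
  push_cast at hs h2
  omega

include hN hn1 hsum in
/-- Link `i` is active at time `t` iff `t` lies on arc `I_i`. -/
lemma active_iff (hDle : D ≤ cc n (N+1)) (i : ℕ) (hi1 : 1 ≤ i) (hi2 : i ≤ N+1) (t : ℤ)
    (h0 : 0 ≤ t) (h1 : t < (D:ℤ)) :
    linkActive N (stOf N n D t) i ↔ inII n D i t := by
  unfold linkActive
  rcases eq_or_lt_of_le hi1 with hA | hA'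
  · -- i = 1
    subst hA
    rw [show (1:ℕ) - 1 = 0 from rfl, nodeState_zero,
      nodeState_stOf N n D t 1 le_rfl hN]
    simp only [true_and, decide_eq_false_iff_not, not_and, not_exists]
    constructor
    · intro h
      by_contra hc
      obtain ⟨j, hj1, hj2, hj3⟩ := cover N n D hN hn1 hsum hDle t h0 h1
      rcases eq_or_lt_of_le hj1 with h1' | h1'
      · exact hc (h1' ▸ hj3)
      · exact h hc j (Finset.mem_Icc.mpr ⟨by omega, hj2⟩) h1' hj3
    · intro h hni
      exact absurd h hni
  · rcases eq_or_lt_of_le hi2 with hB | hB'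
    · -- i = N+1
      subst hB
      rw [Nat.add_sub_cancel, nodeState_stOf N n D t N hN le_rfl, nodeState_top]
      simp only [and_true, decide_eq_true_eq]
      constructor
      · rintro ⟨hnN, j, hjmem, hjgt, hjin⟩
        simp only [Finset.mem_Icc] at hjmem
        have : j = N + 1 := by omega
        exact this ▸ hjin
      · intro h
        refine ⟨?_, N+1, Finset.mem_Icc.mpr ⟨by omega, le_rfl⟩, by omega, h⟩
        intro hc
        exact not_consec N n D hN hn1 hsum N (Finset.mem_Icc.mpr ⟨hN, le_rfl⟩) t ⟨hc, h⟩
    · -- 2 ≤ i ≤ N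
      have h2i : 2 ≤ i := hA'
      have hiN : i ≤ N := by omega
      have him1 : 1 ≤ i - 1 ∧ i - 1 ≤ N := by omega
      rw [nodeState_stOf N n D t (i-1) him1.1 him1.2,
        nodeState_stOf N n D t i hi1 hiN]
      simp only [decide_eq_true_eq, decide_eq_false_iff_not]
      constructor
      · rintro ⟨⟨hnim1, j, hjmem, hjgt, hjin⟩, hnAi⟩
        simp only [Finset.mem_Icc] at hjmem
        by_contra hc
        apply hnAi
        refine ⟨hc, j, Finset.mem_Icc.mpr hjmem, ?_, hjin⟩
        rcases Nat.lt_or_ge i j with h | h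
        · exact h
        · have : j = i := by omega
          exact absurd (this ▸ hjin) hc
      · intro h
        have hnc := not_consec N n D hN hn1 hsum (i-1) (Finset.mem_Icc.mpr him1) t
        rw [show i - 1 + 1 = i by omega] at hnc
        refine ⟨⟨fun hc => hnc ⟨hc, h⟩, i, Finset.mem_Icc.mpr ⟨hi1, hi2⟩, by omega, h⟩, ?_⟩
        rintro ⟨hni, -⟩
        exact hni h

omit hN hn1 hsum

/-! ### Breakpoints -/

def BF : Finset ℕ := (Finset.range (N+2)).image (fun i => cc n i % D)

lemma zero_mem_BF : 0 ∈ BF N n D := by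
  simp only [BF, Finset.mem_image]
  exact ⟨0, by simp, by simp [cc]⟩

lemma BF_card (hex : ∃ j ∈ Finset.Icc 1 N, n j + n (j+1) = D) :
    (BF N n D).card ≤ N + 1 := by
  obtain ⟨j, hj, hjD⟩ := hex
  simp only [Finset.mem_Icc] at hj
  have hcc : cc n (j+1) = cc n (j-1) + D := by
    rw [cc_sub_one n (j+1) (by omega), Nat.add_sub_cancel, cc_sub_one n j (by omega), ← hjD]
    ring
  have heq : cc n (j+1) % D = cc n (j-1) % D := by
    rw [hcc, Nat.add_mod_right]
  have hsub : BF N n D ⊆ ((Finset.range (N+2)).erase (j+1)).image (fun i => cc n i % D) := by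
    intro x hx
    simp only [BF, Finset.mem_image] at hx
    obtain ⟨i, hi, rfl⟩ := hx
    simp only [Finset.mem_image, Finset.mem_erase]
    by_cases h : i = j + 1
    · exact ⟨j - 1, ⟨by omega, Finset.mem_range.mpr (by omega)⟩, by rw [← heq, h]⟩
    · exact ⟨i, ⟨h, hi⟩, rfl⟩
  calc (BF N n D).card ≤ _ := Finset.card_le_card hsub
    _ ≤ ((Finset.range (N+2)).erase (j+1)).card := Finset.card_image_le
    _ ≤ N + 1 := by
        rw [Finset.card_erase_of_mem (Finset.mem_range.mpr (by omega)), Finset.card_range]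
        omega

include hn1 in
/-- Arc membership is constant between breakpoints: rounding `t` down to the
largest breakpoint `b ≤ t` does not change arc membership. -/
lemma round_inII (hnlt' : ∀ i ∈ Finset.Icc 1 (N+1), n i < D) (t b : ℕ) (hbt : b ≤ t)
    (htD : t < D) (hmax : ∀ x ∈ BF N n D, x ≤ t → x ≤ b) (i : ℕ)
    (hi : i ∈ Finset.Icc 1 (N+1)) :
    (inII n D i (t:ℤ) ↔ inII n D i (b:ℤ)) := by
  simp only [Finset.mem_Icc] at hi
  have hD : 0 < D := by
    have := hnlt' i (Finset.mem_Icc.mpr hi); omega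
  have hDz : (D:ℤ) ≠ 0 := by exact_mod_cast hD.ne'
  have hni1 : 1 ≤ n i := hn1 i (Finset.mem_Icc.mpr hi)
  have hniD : n i < D := hnlt' i (Finset.mem_Icc.mpr hi)
  set r : ℤ := (cc n (i-1) : ℤ) with hr
  have hrr : cc n (i-1) % D ∈ BF N n D := by
    simp only [BF, Finset.mem_image]
    exact ⟨i-1, Finset.mem_range.mpr (by omega), rfl⟩
  have hee : cc n i % D ∈ BF N n D := by
    simp only [BF, Finset.mem_image]
    exact ⟨i, Finset.mem_range.mpr (by omega), rfl⟩
  have prr : (((cc n (i-1) % D : ℕ) : ℤ) - r) % (D:ℤ) = 0 := by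
    push_cast
    rw [emod_sub_self_emod]
    simp [hr]
  have pee : (((cc n i % D : ℕ) : ℤ) - r) % (D:ℤ) = (n i : ℤ) := by
    push_cast
    rw [emod_sub_self_emod, cc_sub_one n i (by omega)]
    push_cast
    rw [show ((cc n (i-1) : ℤ) + (n i : ℤ) - r) = (n i : ℤ) by rw [hr]; ring]
    exact Int.emod_eq_of_lt (by positivity) (by exact_mod_cast hniD)
  have hbD : b < D := lt_of_le_of_lt hbt htD
  constructor
  · intro ht
    by_contra hbn
    rw [inII, not_lt] at hbn
    have hcb := circ_between' (D:ℤ) b t ((cc n (i-1) % D : ℕ) : ℤ) r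
      (by exact_mod_cast hD) (by positivity) (by exact_mod_cast hbt) (by exact_mod_cast htD)
      (by positivity) (by exact_mod_cast Nat.mod_lt _ hD)
      (lt_of_lt_of_le ht hbn) (by rw [prr]; exact Int.emod_nonneg _ hDz)
    have h1 : b < cc n (i-1) % D := by exact_mod_cast hcb.1
    have h2 : cc n (i-1) % D ≤ t := by exact_mod_cast hcb.2
    exact absurd (hmax _ hrr h2) (by omega)
  · intro hb'
    by_contra htn
    rw [inII, not_lt] at htn
    have hcb := circ_between (D:ℤ) b t ((cc n i % D : ℕ) : ℤ) r
      (by exact_mod_cast hD) (by positivity) (by exact_mod_cast hbt) (by exact_mod_cast htD)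
      (by positivity) (by exact_mod_cast Nat.mod_lt _ hD)
      (by rw [pee]; exact hb') (by rw [pee]; exact htn)
    have h1 : b < cc n i % D := by exact_mod_cast hcb.1
    have h2 : cc n i % D ≤ t := by exact_mod_cast hcb.2
    exact absurd (hmax _ hee h2) (by omega)

include hn1 in
lemma stOf_round (hnlt' : ∀ i ∈ Finset.Icc 1 (N+1), n i < D) (t b : ℕ) (hbt : b ≤ t)
    (htD : t < D) (hmax : ∀ x ∈ BF N n D, x ≤ t → x ≤ b) :
    stOf N n D (t:ℤ) = stOf N n D (b:ℤ) := by
  have H : ∀ j ∈ Finset.Icc 1 (N+1), (inII n D j (t:ℤ) ↔ inII n D j (b:ℤ)) :=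
    fun j hj => round_inII N n D hn1 hnlt' t b hbt htD hmax j hj
  funext k
  have hk : (k:ℕ)+1 ∈ Finset.Icc 1 (N+1) := by
    have := k.2
    simp only [Finset.mem_Icc]
    omega
  refine decide_eq_decide.mpr ?_
  constructor
  · rintro ⟨h1, j, hj, h2, h3⟩
    exact ⟨fun hc => h1 ((H _ hk).mpr hc), j, hj, h2, (H j hj).mp h3⟩
  · rintro ⟨h1, j, hj, h2, h3⟩
    exact ⟨fun hc => h1 ((H _ hk).mp hc), j, hj, h2, (H j hj).mpr h3⟩

end Main

/-- The master lemma. -/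
lemma main_aux (N : ℕ) (hN : 1 ≤ N) (n : ℕ → ℕ) (D : ℕ)
    (hn1 : ∀ i ∈ Finset.Icc 1 (N+1), 1 ≤ n i)
    (hsum : ∀ j ∈ Finset.Icc 1 N, n j + n (j+1) ≤ D)
    (hex : ∃ j ∈ Finset.Icc 1 N, n j + n (j+1) = D) :
    ∃ lam : (Fin N → Bool) → ℝ,
      (∀ s, 0 ≤ lam s) ∧ (∑ s, lam s) = 1 ∧
      {s : Fin N → Bool | lam s ≠ 0}.ncard ≤ N + 1 ∧
      ∀ i ∈ Finset.Icc 1 (N + 1), linkTime N lam i = (n i : ℝ) / (D : ℝ) := by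
  classical
  have hDp : 0 < D := hDpos N n D hN hn1 hsum
  have hnlt' := hnlt N n D hN hn1 hsum
  have hDle : D ≤ cc n (N+1) := by
    obtain ⟨j, hj, hjD⟩ := hex
    simp only [Finset.mem_Icc] at hj
    have hkk : ({j-1, j} : Finset ℕ) ⊆ Finset.range (N+1) := by
      intro x hx
      simp only [Finset.mem_insert, Finset.mem_singleton] at hx
      simp only [Finset.mem_range]
      omega
    have hle := Finset.sum_le_sum_of_subset (f := fun k => n (k+1)) hkk
    rw [Finset.sum_pair (by omega : j-1 ≠ j)] at hle
    rw [show j - 1 + 1 = j by omega] at hle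
    calc D = n j + n (j+1) := hjD.symm
      _ ≤ _ := hle
  set lam : (Fin N → Bool) → ℝ :=
    fun s => ((((Finset.range D).filter (fun t : ℕ => stOf N n D (t:ℤ) = s)).card : ℝ) / (D:ℝ))
    with hlam
  have hfib := Finset.card_eq_sum_card_fiberwise
    (s := Finset.range D) (t := Finset.univ) (f := fun t : ℕ => stOf N n D (t:ℤ))
    (fun x _ => Finset.mem_univ _)
  refine ⟨lam, ?_, ?_, ?_, ?_⟩
  · intro s
    rw [hlam]
    positivity
  · rw [hlam]
    rw [← Finset.sum_div]
    rw [← Nat.cast_sum, ← hfib, Finset.card_range]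
    field_simp
  · set img := (BF N n D).image (fun b : ℕ => stOf N n D (b:ℤ)) with himg
    have hsub : {s : Fin N → Bool | lam s ≠ 0} ⊆ ↑img := by
      intro s hs
      simp only [Set.mem_setOf_eq, hlam] at hs
      have hcard : ((Finset.range D).filter (fun t : ℕ => stOf N n D (t:ℤ) = s)).Nonempty := by
        rw [Finset.nonempty_iff_ne_empty]
        intro h
        apply hs
        rw [h]
        simp
      obtain ⟨t, ht⟩ := hcard
      simp only [Finset.mem_filter, Finset.mem_range] at ht
      have hne : ((BF N n D).filter (fun x => x ≤ t)).Nonempty :=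
        ⟨0, Finset.mem_filter.mpr ⟨zero_mem_BF N n D, Nat.zero_le t⟩⟩
      set b := ((BF N n D).filter (fun x => x ≤ t)).max' hne with hb
      have hbmem := Finset.max'_mem _ hne
      rw [Finset.mem_filter] at hbmem
      have hmax : ∀ x ∈ BF N n D, x ≤ t → x ≤ b := by
        intro y hy hyt
        rw [hb]
        apply Finset.le_max'
        rw [Finset.mem_filter]
        exact ⟨hy, hyt⟩
      have hst := stOf_round N n D hn1 hnlt' t b hbmem.2 ht.1 hmax
      exact Finset.mem_coe.mpr (Finset.mem_image.mpr ⟨b, hbmem.1, by rw [← hst, ht.2]⟩)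
    calc {s : Fin N → Bool | lam s ≠ 0}.ncard
        ≤ (↑img : Set (Fin N → Bool)).ncard := Set.ncard_le_ncard hsub img.finite_toSet
      _ = img.card := Set.ncard_coe_finset img
      _ ≤ (BF N n D).card := Finset.card_image_le
      _ ≤ N + 1 := BF_card N n D hex
  · intro i hi
    simp only [Finset.mem_Icc] at hi
    rw [linkTime, hlam]
    rw [← Finset.sum_div]
    congr 1
    rw [← Nat.cast_sum]
    have key : ∑ s ∈ Finset.univ.filter (fun s : Fin N → Bool => linkActive N s i),
        ((Finset.range D).filter (fun t : ℕ => stOf N n D (t:ℤ) = s)).card = n i := by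
      have h1 := Finset.card_eq_sum_card_fiberwise
        (s := (Finset.range D).filter (fun t : ℕ => linkActive N (stOf N n D (t:ℤ)) i))
        (t := Finset.univ.filter (fun s : Fin N → Bool => linkActive N s i))
        (f := fun t : ℕ => stOf N n D (t:ℤ))
        (by
          intro x hx
          simp only [Finset.mem_coe, Finset.mem_filter] at hx ⊢
          exact ⟨Finset.mem_univ _, hx.2⟩)
      have h2 : ∀ s ∈ Finset.univ.filter (fun s : Fin N → Bool => linkActive N s i),
          (((Finset.range D).filter
              (fun t : ℕ => linkActive N (stOf N n D (t:ℤ)) i)).filter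
            (fun t : ℕ => stOf N n D (t:ℤ) = s))
          = (Finset.range D).filter (fun t : ℕ => stOf N n D (t:ℤ) = s) := by
        intro s hs
        simp only [Finset.mem_filter, Finset.mem_univ, true_and] at hs
        ext t
        simp only [Finset.mem_filter, Finset.mem_range]
        constructor
        · rintro ⟨⟨h1', -⟩, h2'⟩
          exact ⟨h1', h2'⟩
        · rintro ⟨h1', h2'⟩
          exact ⟨⟨h1', by rw [h2']; exact hs⟩, h2'⟩
      have hstep : (∑ s ∈ Finset.univ.filter (fun s : Fin N → Bool => linkActive N s i),
          ((Finset.range D).filter (fun t : ℕ => stOf N n D (t:ℤ) = s)).card)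
          = ((Finset.range D).filter
              (fun t : ℕ => linkActive N (stOf N n D (t:ℤ)) i)).card := by
        rw [h1]
        exact (Finset.sum_congr rfl (fun s hs => congrArg Finset.card (h2 s hs))).symm
      rw [hstep]
      have h3 : (Finset.range D).filter (fun t : ℕ => linkActive N (stOf N n D (t:ℤ)) i)
          = (Finset.range D).filter (fun t : ℕ => inII n D i (t:ℤ)) := by
        apply Finset.filter_congr
        intro t ht
        simp only [Finset.mem_range] at ht
        have := active_iff N n D hN hn1 hsum hDle i hi.1 hi.2 (t:ℤ)
          (by positivity) (by exact_mod_cast ht)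
        simp [this]
      rw [h3]
      exact card_arc D hDp ((cc n (i-1) : ℕ) : ℤ) (n i)
        (le_of_lt (hnlt' i (Finset.mem_Icc.mpr hi)))
    rw [key]

end HDX

/-- For integer link capacities with common multiple `M`, setting `n_i = M / ℓ_i` and
`Δ = max_{i ∈ [1,N]} (n_i + n_{i+1})`, there is a simple schedule (support of size at most
`N+1`) with `Σ_{s ∈ S_i} λ_s = n_i / Δ` for every link `i`. -/
theorem exists_simple_schedule_integer (N : ℕ) (hN : 1 ≤ N) (ℓ : ℕ → ℕ)
    (hℓ : ∀ i ∈ Finset.Icc 1 (N + 1), 0 < ℓ i)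
    (M : ℕ) (hM : 0 < M) (hdvd : ∀ i ∈ Finset.Icc 1 (N + 1), ℓ i ∣ M) :
    ∃ lam : (Fin N → Bool) → ℝ,
      (∀ s, 0 ≤ lam s) ∧ (∑ s, lam s) = 1 ∧
      {s : Fin N → Bool | lam s ≠ 0}.ncard ≤ N + 1 ∧
      ∀ i ∈ Finset.Icc 1 (N + 1),
        linkTime N lam i =
          (M / ℓ i : ℕ) /
            (((Finset.Icc 1 N).sup' (Finset.nonempty_Icc.mpr hN)
              (fun j => M / ℓ j + M / ℓ (j + 1)) : ℕ) : ℝ) := by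
  have hn1 : ∀ i ∈ Finset.Icc 1 (N+1), 1 ≤ M / ℓ i := by
    intro i hi
    exact (Nat.one_le_div_iff (hℓ i hi)).mpr (Nat.le_of_dvd hM (hdvd i hi))
  have hsum : ∀ j ∈ Finset.Icc 1 N, M / ℓ j + M / ℓ (j+1) ≤
      (Finset.Icc 1 N).sup' (Finset.nonempty_Icc.mpr hN)
        (fun j => M / ℓ j + M / ℓ (j + 1)) := by
    intro j hj
    exact Finset.le_sup' (f := fun j => M / ℓ j + M / ℓ (j + 1)) hj
  have hex : ∃ j ∈ Finset.Icc 1 N, M / ℓ j + M / ℓ (j+1) =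
      (Finset.Icc 1 N).sup' (Finset.nonempty_Icc.mpr hN)
        (fun j => M / ℓ j + M / ℓ (j + 1)) := by
    obtain ⟨j, hj, hje⟩ := Finset.exists_mem_eq_sup' (Finset.nonempty_Icc.mpr hN)
      (fun j => M / ℓ j + M / ℓ (j + 1))
    exact ⟨j, hj, hje.symm⟩
  obtain ⟨lam, h1, h2, h3, h4⟩ := HDX.main_aux N hN (fun i => M / ℓ i)
    ((Finset.Icc 1 N).sup' (Finset.nonempty_Icc.mpr hN)
      (fun j => M / ℓ j + M / ℓ (j + 1))) hn1 hsum hex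
  exact ⟨lam, h1, h2, h3, h4⟩
end

section
/- Let N ≥ 1 be an integer and let ℓ_1, …, ℓ_{N+1} be positive integers. Let M be a common multiple of ℓ_1, …, ℓ_{N+1}, set n_i = M/ℓ_i for i ∈ {1,…,N+1}, and set Δ = max_{i∈{1,…,N}} (n_i + n_{i+1}). If a schedule λ satisfies Σ_{s∈S_i} λ_s = n_i/Δ for every i ∈ {1,…,N+1}, then its rate is C^λ = M/Δ, and moreover M/Δ = min_{i∈{1,…,N}} ℓ_i·ℓ_{i+1}/(ℓ_i + ℓ_{i+1}). -/
open Finset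

/-- If a schedule satisfies `Σ_{s ∈ S_i} λ_s = n_i / Δ` for every link `i`, where
`n_i = M / ℓ_i` and `Δ = max_{i ∈ [1,N]} (n_i + n_{i+1})`, then its rate is `M / Δ`,
which equals `min_{i ∈ [1,N]} ℓ_i ℓ_{i+1} / (ℓ_i + ℓ_{i+1})`. -/
theorem rate_of_schedule_integer (N : ℕ) (hN : 1 ≤ N) (ℓ : ℕ → ℕ)
    (hℓ : ∀ i ∈ Finset.Icc 1 (N + 1), 0 < ℓ i)
    (M : ℕ) (hM : 0 < M) (hdvd : ∀ i ∈ Finset.Icc 1 (N + 1), ℓ i ∣ M)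
    (lam : (Fin N → Bool) → ℝ) (hlam : ∀ s, 0 ≤ lam s) (hsum : (∑ s, lam s) = 1)
    (htime : ∀ i ∈ Finset.Icc 1 (N + 1),
      linkTime N lam i =
        (M / ℓ i : ℕ) /
          (((Finset.Icc 1 N).sup' (Finset.nonempty_Icc.mpr hN)
            (fun j => M / ℓ j + M / ℓ (j + 1)) : ℕ) : ℝ)) :
    rate N (fun i => (ℓ i : ℝ)) lam =
        (M : ℝ) /
          (((Finset.Icc 1 N).sup' (Finset.nonempty_Icc.mpr hN)
            (fun j => M / ℓ j + M / ℓ (j + 1)) : ℕ) : ℝ) ∧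
      (M : ℝ) /
          (((Finset.Icc 1 N).sup' (Finset.nonempty_Icc.mpr hN)
            (fun j => M / ℓ j + M / ℓ (j + 1)) : ℕ) : ℝ) =
        (Finset.Icc 1 N).inf' (Finset.nonempty_Icc.mpr hN)
          (fun i => (ℓ i : ℝ) * (ℓ (i + 1) : ℝ) / ((ℓ i : ℝ) + (ℓ (i + 1) : ℝ))) := by

  set Δ : ℕ := (Finset.Icc 1 N).sup' (Finset.nonempty_Icc.mpr hN)
      (fun j => M / ℓ j + M / ℓ (j + 1)) with hΔdef
  have hmem : ∀ i ∈ Finset.Icc 1 N, i ∈ Finset.Icc 1 (N + 1) ∧ i + 1 ∈ Finset.Icc 1 (N + 1) := by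
    intro i hi
    simp only [Finset.mem_Icc] at hi ⊢
    omega
  have hnpos : ∀ i ∈ Finset.Icc 1 (N + 1), 0 < M / ℓ i := fun i hi =>
    Nat.div_pos (Nat.le_of_dvd hM (hdvd i hi)) (hℓ i hi)
  have h1 : (1 : ℕ) ∈ Finset.Icc 1 N := Finset.mem_Icc.mpr ⟨le_refl _, hN⟩
  have hΔpos : 0 < Δ := by
    have := Finset.le_sup' (fun j => M / ℓ j + M / ℓ (j + 1)) h1
    have h1' := hnpos 1 (hmem 1 h1).1
    exact lt_of_lt_of_le h1' (le_trans (Nat.le_add_right _ _) this)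
  have hΔR : (0 : ℝ) < (Δ : ℝ) := by exact_mod_cast hΔpos
  constructor
  · unfold rate
    rw [Finset.inf'_congr (H := ⟨1, by simp⟩) rfl
      (g := fun _ => (M : ℝ) / (Δ : ℝ)) ?_ ]
    · exact Finset.inf'_const _ _
    · intro i hi
      rw [htime i hi]
      have hc : ((M / ℓ i : ℕ) : ℝ) * (ℓ i : ℝ) = (M : ℝ) := by
        exact_mod_cast congrArg (Nat.cast : ℕ → ℝ) (Nat.div_mul_cancel (hdvd i hi))
      rw [div_mul_eq_mul_div, hc]
  · have key : ∀ i ∈ Finset.Icc 1 N,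
        (M : ℝ) / ((M / ℓ i + M / ℓ (i + 1) : ℕ) : ℝ)
          = (ℓ i : ℝ) * (ℓ (i + 1) : ℝ) / ((ℓ i : ℝ) + (ℓ (i + 1) : ℝ)) := by
      intro i hi
      obtain ⟨hi1, hi2⟩ := hmem i hi
      have ha : (0 : ℝ) < (ℓ i : ℝ) := by exact_mod_cast hℓ i hi1
      have hb : (0 : ℝ) < (ℓ (i + 1) : ℝ) := by exact_mod_cast hℓ (i + 1) hi2
      have hMr : (0 : ℝ) < (M : ℝ) := by exact_mod_cast hM
      have h1 : ((M / ℓ i : ℕ) : ℝ) = (M : ℝ) / (ℓ i : ℝ) :=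
        Nat.cast_div (hdvd i hi1) (by exact_mod_cast ha.ne')
      have h2 : ((M / ℓ (i + 1) : ℕ) : ℝ) = (M : ℝ) / (ℓ (i + 1) : ℝ) :=
        Nat.cast_div (hdvd (i + 1) hi2) (by exact_mod_cast hb.ne')
      push_cast
      rw [h1, h2]
      rw [div_eq_div_iff]
      · field_simp
        ring
      · have : (0:ℝ) < (M : ℝ) / (ℓ i : ℝ) := by positivity
        have : (0:ℝ) < (M : ℝ) / (ℓ (i+1) : ℝ) := by positivity
        linarith
      · positivity
    apply le_antisymm
    · apply Finset.le_inf'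
      intro i hi
      rw [← key i hi]
      apply div_le_div_of_nonneg_left (by positivity) _ _
      · exact_mod_cast Nat.add_pos_left (hnpos i (hmem i hi).1) _
      · exact_mod_cast Finset.le_sup' (fun j => M / ℓ j + M / ℓ (j + 1)) hi
    · obtain ⟨i₀, hi₀, hE⟩ := Finset.exists_mem_eq_sup' (Finset.nonempty_Icc.mpr hN)
        (fun j => M / ℓ j + M / ℓ (j + 1))
      calc (Finset.Icc 1 N).inf' (Finset.nonempty_Icc.mpr hN)
            (fun i => (ℓ i : ℝ) * (ℓ (i + 1) : ℝ) / ((ℓ i : ℝ) + (ℓ (i + 1) : ℝ)))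
          ≤ (ℓ i₀ : ℝ) * (ℓ (i₀ + 1) : ℝ) / ((ℓ i₀ : ℝ) + (ℓ (i₀ + 1) : ℝ)) :=
            Finset.inf'_le _ hi₀
        _ = (M : ℝ) / ((M / ℓ i₀ + M / ℓ (i₀ + 1) : ℕ) : ℝ) := (key i₀ hi₀).symm
        _ = (M : ℝ) / (Δ : ℝ) := by rw [hΔdef, hE]
end

section
/- Let N ≥ 1 be an integer and let B be a nonempty punctured subset of [1, N+1]. Define the cut A_B = {i ∈ {1,…,N} : i > max B} ∪ (B \ {N+1}). Then the crossing set of A_B is exactly B, i.e., E(A_B) = B. -/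
open Finset

/-- A set of naturals is punctured if it contains no two consecutive integers. -/
def Punctured (H : Finset ℕ) : Prop := ∀ i ∈ H, i + 1 ∉ H

/-- For a nonempty punctured subset `B` of `[1, N+1]`, the cut
`A_B = {i ∈ [1,N] : i > max B} ∪ (B \ {N+1})` has crossing set exactly `B`. -/
theorem crossing_of_punctured (N : ℕ) (hN : 1 ≤ N) (B : Finset ℕ) (hB : B.Nonempty)
    (hsub : B ⊆ Finset.Icc 1 (N + 1)) (hpunct : Punctured B) :
    crossing N (((Finset.Icc 1 N).filter (fun i => B.max' hB < i)) ∪ (B \ {N + 1})) = B := by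
  set M := B.max' hB with hM
  have hMB : M ∈ B := B.max'_mem hB
  have hM1 : 1 ≤ M := (mem_Icc.1 (hsub hMB)).1
  have hM2 : M ≤ N + 1 := (mem_Icc.1 (hsub hMB)).2
  ext i
  simp only [crossing, mem_filter, mem_union, mem_sdiff, mem_singleton, mem_Icc]
  constructor
  · rintro ⟨⟨h1, h2⟩, hfst, hsnd⟩
    by_contra hiB
    rcases hfst with (⟨⟨hi1, hiN⟩, hMi⟩ | ⟨hb, _⟩) | hEq
    · -- i ∈ filter part
      rcases hsnd with h0 | ⟨⟨ha, hb⟩, hnA⟩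
      · omega
      · rcases lt_or_eq_of_le (show M ≤ i - 1 by omega) with hlt | heq
        · exact hnA (Or.inl ⟨⟨ha, hb⟩, hlt⟩)
        · exact hnA (Or.inr ⟨heq ▸ hMB, by omega⟩)
    · exact hiB hb
    · subst hEq
      rcases hsnd with h0 | ⟨⟨ha, hb⟩, hnA⟩
      · omega
      · have hNe : N + 1 - 1 = N := by omega
        rw [hNe] at hnA
        have hMN : M ≤ N := by
          rcases lt_or_eq_of_le hM2 with h | h
          · omega
          · exact absurd (h ▸ hMB) hiB
        rcases lt_or_eq_of_le hMN with hlt | heq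
        · exact hnA (Or.inl ⟨⟨hN, le_refl N⟩, hlt⟩)
        · exact hnA (Or.inr ⟨heq ▸ hMB, by omega⟩)
  · intro hiB
    have hi := mem_Icc.1 (hsub hiB)
    have hiM : i ≤ M := B.le_max' i hiB
    refine ⟨hi, ?_, ?_⟩
    · by_cases h : i = N + 1
      · exact Or.inr h
      · exact Or.inl (Or.inr ⟨hiB, h⟩)
    · by_cases h1 : i = 1
      · exact Or.inl (by omega)
      · refine Or.inr ⟨⟨by omega, by omega⟩, ?_⟩
        rintro (⟨⟨_, _⟩, hMlt⟩ | ⟨hb, _⟩)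
        · omega
        · have heq : i - 1 + 1 = i := by omega
          exact hpunct _ hb (heq ▸ hiB)
end

section
/- For every integer N ≥ 4, the number of primitive punctured subsets satisfies the recurrence T(N) = T(N−2) + T(N−3). -/
open Finset

instance : DecidablePred Punctured := fun _ => Finset.decidableDforallFinset

/-- A primitive punctured subset of `[1,n]`: a punctured subset of `[1,n]` that is
maximal, i.e. no element of `[1,n]` can be added keeping it punctured. -/
def PrimitivePunctured (n : ℕ) (H : Finset ℕ) : Prop :=
  H ⊆ Finset.Icc 1 n ∧ Punctured H ∧
    ∀ i ∈ Finset.Icc 1 n, i ∉ H → ¬ Punctured (insert i H)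

instance (n : ℕ) : DecidablePred (PrimitivePunctured n) := fun _ => by
  unfold PrimitivePunctured; infer_instance

/-- `T n` is the number of primitive punctured subsets of `[1,n]`. -/
def T (n : ℕ) : ℕ := ((Finset.Icc 1 n).powerset.filter (PrimitivePunctured n)).card

lemma punct_mono {K H : Finset ℕ} (hs : K ⊆ H) (hH : Punctured H) : Punctured K :=
  fun i hi hc => hH i (hs hi) (hs hc)

lemma punct_insert {a : ℕ} {K : Finset ℕ} (hK : Punctured K) (h1 : a + 1 ∉ K)
    (h2 : ∀ b ∈ K, b + 1 ≠ a) : Punctured (insert a K) := by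
  intro i hi
  rcases Finset.mem_insert.1 hi with rfl | hiK
  · simp only [Finset.mem_insert]
    push_neg
    exact ⟨by omega, h1⟩
  · simp only [Finset.mem_insert]
    push_neg
    exact ⟨h2 i hiK, hK i hiK⟩

lemma mem_T {n : ℕ} {H : Finset ℕ} :
    H ∈ (Finset.Icc 1 n).powerset.filter (PrimitivePunctured n) ↔ PrimitivePunctured n H := by
  simp only [Finset.mem_filter, Finset.mem_powerset]
  exact ⟨fun h => h.2, fun h => ⟨h.1, h⟩⟩

lemma not_consec_hi {M : ℕ} {H : Finset ℕ} (h : PrimitivePunctured (M + 4) H) :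
    M + 3 ∈ H → M + 4 ∉ H := fun h3 => h.2.1 (M + 3) h3

lemma top_mem_of_not {M : ℕ} {H : Finset ℕ} (h : PrimitivePunctured (M + 4) H)
    (hN : M + 4 ∉ H) : M + 3 ∈ H := by
  by_contra h3
  have hmax := h.2.2 (M + 4) (by simp) hN
  apply hmax
  apply punct_insert h.2.1
  · intro hc; have := h.1 hc; simp only [Finset.mem_Icc] at this; omega
  · intro b hb hbe
    have hbI := h.1 hb
    simp only [Finset.mem_Icc] at hbI
    have : b = M + 3 := by omega
    exact h3 (this ▸ hb)

-- Case N ∈ H : bijection with primitive punctured subsets of [1, M+2]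

lemma caseA_fwd {M : ℕ} {H : Finset ℕ} (h : PrimitivePunctured (M + 4) H)
    (hN : M + 4 ∈ H) : PrimitivePunctured (M + 2) (H.erase (M + 4)) := by
  have h3 : M + 3 ∉ H := fun h3 => not_consec_hi h h3 hN
  have hsub : H.erase (M + 4) ⊆ Finset.Icc 1 (M + 2) := by
    intro x hx
    have hx4 := Finset.ne_of_mem_erase hx
    have hxH := Finset.mem_of_mem_erase hx
    have hxI := h.1 hxH
    simp only [Finset.mem_Icc] at hxI ⊢
    have hx3 : x ≠ M + 3 := fun e => h3 (e ▸ hxH)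
    omega
  refine ⟨hsub, punct_mono (Finset.erase_subset _ _) h.2.1, ?_⟩
  intro i hi hiH hP
  simp only [Finset.mem_Icc] at hi
  have hiH' : i ∉ H := by
    intro hc
    exact hiH (Finset.mem_erase.2 ⟨by omega, hc⟩)
  apply h.2.2 i (by simp only [Finset.mem_Icc]; omega) hiH'
  have key : insert i H = insert (M + 4) (insert i (H.erase (M + 4))) := by
    rw [Finset.insert_comm, Finset.insert_erase hN]
  rw [key]
  apply punct_insert hP
  · simp only [Finset.mem_insert, Finset.mem_erase]
    push_neg
    refine ⟨by omega, fun _ hc => ?_⟩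
    have := h.1 hc; simp only [Finset.mem_Icc] at this; omega
  · intro b hb
    rcases Finset.mem_insert.1 hb with rfl | hb'
    · omega
    · have := hsub hb'; simp only [Finset.mem_Icc] at this; omega

lemma caseA_bwd {M : ℕ} {H' : Finset ℕ} (h : PrimitivePunctured (M + 2) H') :
    PrimitivePunctured (M + 4) (insert (M + 4) H') := by
  have hle : ∀ b ∈ H', b ≤ M + 2 := fun b hb => by
    have := h.1 hb; simp only [Finset.mem_Icc] at this; omega
  refine ⟨?_, ?_, ?_⟩
  · intro x hx
    rcases Finset.mem_insert.1 hx with rfl | hx'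
    · simp
    · have := h.1 hx'; simp only [Finset.mem_Icc] at this ⊢; omega
  · apply punct_insert h.2.1
    · intro hc; have := hle _ hc; omega
    · intro b hb; have := hle _ hb; omega
  · intro i hi hiH
    simp only [Finset.mem_Icc] at hi
    simp only [Finset.mem_insert] at hiH
    push_neg at hiH
    rcases Nat.lt_or_ge i (M + 3) with hlt | hge
    · -- i ≤ M + 2 : use maximality of H'
      intro hP
      apply h.2.2 i (by simp only [Finset.mem_Icc]; omega) hiH.2
      apply punct_mono _ hP
      intro x hx
      rcases Finset.mem_insert.1 hx with rfl | hx'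
      · exact Finset.mem_insert_self _ _
      · exact Finset.mem_insert_of_mem (Finset.mem_insert_of_mem hx')
    · -- i = M + 3
      have : i = M + 3 := by omega
      subst this
      intro hP
      exact hP (M + 3) (Finset.mem_insert_self _ _)
        (Finset.mem_insert_of_mem (Finset.mem_insert_self _ _))

-- Case N ∉ H : then M+3 ∈ H; bijection with primitive punctured subsets of [1, M+1]

lemma caseB_fwd {M : ℕ} {H : Finset ℕ} (h : PrimitivePunctured (M + 4) H)
    (hN : M + 4 ∉ H) : PrimitivePunctured (M + 1) (H.erase (M + 3)) := by
  have h3 : M + 3 ∈ H := top_mem_of_not h hN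
  have h2 : M + 2 ∉ H := fun hc => h.2.1 (M + 2) hc h3
  have hle : ∀ b ∈ H.erase (M + 3), b ≤ M + 1 := by
    intro b hb
    have hb3 := Finset.ne_of_mem_erase hb
    have hbH := Finset.mem_of_mem_erase hb
    have := h.1 hbH; simp only [Finset.mem_Icc] at this
    have hb4 : b ≠ M + 4 := fun e => hN (e ▸ hbH)
    have hb2 : b ≠ M + 2 := fun e => h2 (e ▸ hbH)
    omega
  have hsub : H.erase (M + 3) ⊆ Finset.Icc 1 (M + 1) := by
    intro x hx
    have := h.1 (Finset.mem_of_mem_erase hx)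
    simp only [Finset.mem_Icc] at this ⊢
    exact ⟨this.1, hle _ hx⟩
  refine ⟨hsub, punct_mono (Finset.erase_subset _ _) h.2.1, ?_⟩
  intro i hi hiH hP
  simp only [Finset.mem_Icc] at hi
  have hiH' : i ∉ H := by
    intro hc
    exact hiH (Finset.mem_erase.2 ⟨by omega, hc⟩)
  apply h.2.2 i (by simp only [Finset.mem_Icc]; omega) hiH'
  have key : insert i H = insert (M + 3) (insert i (H.erase (M + 3))) := by
    rw [Finset.insert_comm, Finset.insert_erase h3]
  rw [key]
  apply punct_insert hP
  · simp only [Finset.mem_insert, Finset.mem_erase]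
    push_neg
    refine ⟨by omega, fun _ hc => hN hc⟩
  · intro b hb
    rcases Finset.mem_insert.1 hb with rfl | hb'
    · omega
    · have := hle _ hb'; omega

lemma caseB_bwd {M : ℕ} {H' : Finset ℕ} (h : PrimitivePunctured (M + 1) H') :
    PrimitivePunctured (M + 4) (insert (M + 3) H') := by
  have hle : ∀ b ∈ H', b ≤ M + 1 := fun b hb => by
    have := h.1 hb; simp only [Finset.mem_Icc] at this; omega
  refine ⟨?_, ?_, ?_⟩
  · intro x hx
    rcases Finset.mem_insert.1 hx with rfl | hx'
    · simp
    · have := h.1 hx'; simp only [Finset.mem_Icc] at this ⊢; omega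
  · apply punct_insert h.2.1
    · intro hc; have := hle _ hc; omega
    · intro b hb; have := hle _ hb; omega
  · intro i hi hiH
    simp only [Finset.mem_Icc] at hi
    simp only [Finset.mem_insert] at hiH
    push_neg at hiH
    rcases Nat.lt_or_ge i (M + 2) with hlt | hge
    · intro hP
      apply h.2.2 i (by simp only [Finset.mem_Icc]; omega) hiH.2
      apply punct_mono _ hP
      intro x hx
      rcases Finset.mem_insert.1 hx with rfl | hx'
      · exact Finset.mem_insert_self _ _
      · exact Finset.mem_insert_of_mem (Finset.mem_insert_of_mem hx')
    · intro hP
      rcases Nat.lt_or_ge i (M + 3) with h2 | h4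
      · -- i = M + 2
        have : i = M + 2 := by omega
        subst this
        exact hP (M + 2) (Finset.mem_insert_self _ _)
          (Finset.mem_insert_of_mem (Finset.mem_insert_self _ _))
      · -- i = M + 4
        have : i = M + 4 := by omega
        subst this
        exact hP (M + 3) (Finset.mem_insert_of_mem (Finset.mem_insert_self _ _))
          (Finset.mem_insert_self _ _)

/-- The number of primitive punctured subsets satisfies `T(N) = T(N-2) + T(N-3)`. -/
theorem T_recurrence (N : ℕ) (hN : 4 ≤ N) : T N = T (N - 2) + T (N - 3) := by
  obtain ⟨M, rfl⟩ : ∃ M, N = M + 4 := ⟨N - 4, by omega⟩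
  have e2 : M + 4 - 2 = M + 2 := by omega
  have e3 : M + 4 - 3 = M + 1 := by omega
  rw [e2, e3]
  set S := (Finset.Icc 1 (M + 4)).powerset.filter (PrimitivePunctured (M + 4)) with hS
  have hsplit : T (M + 4) = (S.filter (fun H => M + 4 ∈ H)).card
      + (S.filter (fun H => M + 4 ∉ H)).card := by
    rw [T, ← Finset.card_filter_add_card_filter_not (p := fun H => M + 4 ∈ H)]
  rw [hsplit]
  have hA : (S.filter (fun H => M + 4 ∈ H)).card = T (M + 2) := by
    rw [T]
    apply Finset.card_bij' (fun H _ => H.erase (M + 4))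
      (fun H' _ => insert (M + 4) H')
    · intro H hH
      simp only [Finset.mem_filter] at hH
      exact Finset.insert_erase hH.2
    · intro H' hH'
      have h := mem_T.1 hH'
      apply Finset.erase_insert
      intro hc
      have := h.1 hc; simp only [Finset.mem_Icc] at this; omega
    · intro H hH
      simp only [Finset.mem_filter] at hH
      have h := (mem_T.1 hH.1)
      exact mem_T.2 (caseA_fwd h hH.2)
    · intro H' hH'
      have h := mem_T.1 hH'
      refine Finset.mem_filter.2 ⟨mem_T.2 (caseA_bwd h), Finset.mem_insert_self _ _⟩
  have hB : (S.filter (fun H => M + 4 ∉ H)).card = T (M + 1) := by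
    rw [T]
    apply Finset.card_bij' (fun H _ => H.erase (M + 3))
      (fun H' _ => insert (M + 3) H')
    · intro H hH
      simp only [Finset.mem_filter] at hH
      exact Finset.insert_erase (top_mem_of_not (mem_T.1 hH.1) hH.2)
    · intro H' hH'
      have h := mem_T.1 hH'
      apply Finset.erase_insert
      intro hc
      have := h.1 hc; simp only [Finset.mem_Icc] at this; omega
    · intro H hH
      simp only [Finset.mem_filter] at hH
      have h := (mem_T.1 hH.1)
      exact mem_T.2 (caseB_fwd h hH.2)
    · intro H' hH'
      have h := mem_T.1 hH'
      refine Finset.mem_filter.2 ⟨mem_T.2 (caseB_bwd h), ?_⟩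
      simp only [Finset.mem_insert]
      push_neg
      refine ⟨by omega, fun hc => ?_⟩
      have := h.1 hc; simp only [Finset.mem_Icc] at this; omega
  rw [hA, hB]
end

section
/- There exists a constant c > 0 such that for every integer N ≥ 1, the number of primitive punctured subsets of [1,N] satisfies T(N) ≥ c · 2^{N/3}; i.e., T(N) = Ω(2^{N/3}). -/
open Finset

lemma punctured_anti {S T : Finset ℕ} (h : T ⊆ S) (hS : Punctured S) : Punctured T :=
  fun i hi hi1 => hS i (h hi) (h hi1)

lemma step (N : ℕ) : 2 * T N ≤ T (N + 3) := by
  classical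
  set s := (Finset.Icc 1 N).powerset.filter (PrimitivePunctured N) with hs
  set t := (Finset.Icc 1 (N+3)).powerset.filter (PrimitivePunctured (N+3)) with ht
  set A : Finset ℕ → Finset ℕ := fun H => insert (N+2) H with hA
  set B : Finset ℕ → Finset ℕ :=
    fun H => if N ∈ H then insert (N+3) H else insert (N+1) (insert (N+3) H) with hB
  have hmem_s : ∀ H, H ∈ s ↔ PrimitivePunctured N H := by
    intro H
    simp only [hs, mem_filter, mem_powerset]
    exact ⟨fun h => h.2, fun h => ⟨h.1, h⟩⟩
  have hmem_t : ∀ H, H ∈ t ↔ PrimitivePunctured (N+3) H := by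
    intro H
    simp only [ht, mem_filter, mem_powerset]
    exact ⟨fun h => h.2, fun h => ⟨h.1, h⟩⟩
  have hbound : ∀ H, H ∈ s → ∀ i ∈ H, 1 ≤ i ∧ i ≤ N := by
    intro H hH i hi
    have := ((hmem_s H).1 hH).1 hi
    simpa [mem_Icc] using this
  -- A maps into t
  have hAt : ∀ H ∈ s, A H ∈ t := by
    intro H hH
    obtain ⟨hsub, hp, hmax⟩ := (hmem_s H).1 hH
    have hb := hbound H hH
    rw [hmem_t]
    refine ⟨?_, ?_, ?_⟩
    · intro i hi
      simp only [hA, mem_insert] at hi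
      rcases hi with rfl | hi
      · simp [mem_Icc]
      · have := hb i hi; simp [mem_Icc]; omega
    · intro i hi
      simp only [hA, mem_insert] at hi ⊢
      push_neg
      rcases hi with rfl | hi
      · exact ⟨by omega, fun h => by have := hb _ h; omega⟩
      · exact ⟨by have := hb i hi; omega, hp i hi⟩
    · intro i hi hiNot hpun
      simp only [mem_Icc] at hi
      simp only [hA, mem_insert] at hiNot
      push_neg at hiNot
      obtain ⟨hi2, hiH⟩ := hiNot
      by_cases hle : i ≤ N
      · refine hmax i (by simp [mem_Icc]; omega) hiH ?_
        refine punctured_anti ?_ hpun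
        exact insert_subset_insert _ (subset_insert _ _)
      · have hiv : i = N+1 ∨ i = N+3 := by omega
        rcases hiv with rfl | rfl
        · exact hpun (N+1) (by simp) (by simp [hA])
        · exact hpun (N+2) (by simp [hA]) (by simp)
  -- B maps into t
  have hBt : ∀ H ∈ s, B H ∈ t := by
    intro H hH
    obtain ⟨hsub, hp, hmax⟩ := (hmem_s H).1 hH
    have hb := hbound H hH
    rw [hmem_t]
    by_cases hN : N ∈ H
    · simp only [hB, if_pos hN]
      refine ⟨?_, ?_, ?_⟩
      · intro i hi
        simp only [mem_insert] at hi
        rcases hi with rfl | hi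
        · simp [mem_Icc]
        · have := hb i hi; simp [mem_Icc]; omega
      · intro i hi
        simp only [mem_insert] at hi ⊢
        push_neg
        rcases hi with rfl | hi
        · exact ⟨by omega, fun h => by have := hb _ h; omega⟩
        · exact ⟨by have := hb i hi; omega, hp i hi⟩
      · intro i hi hiNot hpun
        simp only [mem_Icc] at hi
        simp only [mem_insert] at hiNot
        push_neg at hiNot
        obtain ⟨hi3, hiH⟩ := hiNot
        by_cases hle : i ≤ N
        · refine hmax i (by simp [mem_Icc]; omega) hiH ?_
          refine punctured_anti ?_ hpun
          exact insert_subset_insert _ (subset_insert _ _)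
        · have hiv : i = N+1 ∨ i = N+2 := by omega
          rcases hiv with rfl | rfl
          · exact hpun N (by simp [hN]) (by simp)
          · exact hpun (N+2) (by simp) (by simp)
    · simp only [hB, if_neg hN]
      refine ⟨?_, ?_, ?_⟩
      · intro i hi
        simp only [mem_insert] at hi
        rcases hi with rfl | rfl | hi
        · simp [mem_Icc]
        · simp [mem_Icc]
        · have := hb i hi; simp [mem_Icc]; omega
      · intro i hi
        simp only [mem_insert] at hi ⊢
        push_neg
        rcases hi with rfl | rfl | hi
        · exact ⟨by omega, by omega, fun h => by have := hb _ h; omega⟩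
        · exact ⟨by omega, by omega, fun h => by have := hb _ h; omega⟩
        · have hiN := hb i hi
          refine ⟨?_, by omega, hp i hi⟩
          intro hcon
          have hxn : i = N := by omega
          exact hN (hxn ▸ hi)
      · intro i hi hiNot hpun
        simp only [mem_Icc] at hi
        simp only [mem_insert] at hiNot
        push_neg at hiNot
        obtain ⟨hi1, hi3, hiH⟩ := hiNot
        by_cases hle : i ≤ N - 1
        · refine hmax i (by simp [mem_Icc]; omega) hiH ?_
          refine punctured_anti ?_ hpun
          refine insert_subset_insert _ ?_
          exact (subset_insert _ _).trans (subset_insert _ _)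
        · have hiv : i = N ∨ i = N + 2 := by omega
          rcases hiv with rfl | rfl
          · exact hpun i (by simp) (by simp)
          · exact hpun (N+2) (by simp) (by simp)
  -- injectivity of A on s
  have hAinj : Set.InjOn A s := by
    intro H1 h1 H2 h2 heq
    have e1 : (N+2) ∉ H1 := fun h => by have := hbound H1 h1 _ h; omega
    have e2 : (N+2) ∉ H2 := fun h => by have := hbound H2 h2 _ h; omega
    have := congrArg (fun S => Finset.erase S (N+2)) heq
    simpa [hA, Finset.erase_insert, e1, e2] using this
  -- membership characterization of B for small elements
  have hBsmall : ∀ H ∈ s, ∀ x, x ≤ N → (x ∈ B H ↔ x ∈ H) := by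
    intro H hH x hx
    have hne : x ≠ N+1 ∧ x ≠ N+3 := by omega
    simp only [hB]
    split <;> simp [hne.1, hne.2]
  have hBinj : Set.InjOn B s := by
    intro H1 h1 H2 h2 heq
    ext x
    by_cases hx : x ≤ N
    · rw [← hBsmall H1 h1 x hx, ← hBsmall H2 h2 x hx, heq]
    · constructor <;> intro h
      · exact absurd (hbound H1 h1 x h).2 hx
      · exact absurd (hbound H2 h2 x h).2 hx
  -- N+2 separates images
  have hA2 : ∀ H, (N+2) ∈ A H := fun H => mem_insert_self _ _
  have hB2 : ∀ H ∈ s, (N+2) ∉ B H := by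
    intro H hH h
    simp only [hB] at h
    split at h <;> simp only [mem_insert] at h <;>
      rcases h with h | h <;> first
        | omega
        | (have := hbound H hH _ h; omega)
        | (rcases h with h | h; omega; have := hbound H hH _ h; omega)
  have hdisj : Disjoint (s.image A) (s.image B) := by
    rw [disjoint_left]
    intro K hK hK'
    simp only [mem_image] at hK hK'
    obtain ⟨H1, h1, rfl⟩ := hK
    obtain ⟨H2, h2, heq⟩ := hK'
    exact hB2 H2 h2 (heq ▸ hA2 H1)
  have hsub : (s.image A) ∪ (s.image B) ⊆ t := by
    intro K hK
    rcases mem_union.1 hK with hK | hK <;> simp only [mem_image] at hK <;>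
      obtain ⟨H, hH, rfl⟩ := hK
    · exact hAt H hH
    · exact hBt H hH
  calc 2 * T N = s.card + s.card := by simp [T, hs]; ring
    _ = (s.image A).card + (s.image B).card := by
        rw [Finset.card_image_of_injOn hAinj, Finset.card_image_of_injOn hBinj]
    _ = ((s.image A) ∪ (s.image B)).card := (Finset.card_union_of_disjoint hdisj).symm
    _ ≤ t.card := Finset.card_le_card hsub
    _ = T (N+3) := by simp [T, ht]

lemma T_base0 : T 0 = 1 := by decide
lemma T_base1 : T 1 = 1 := by decide
lemma T_base2 : T 2 = 2 := by decide

lemma T_pow (N : ℕ) : 2 ^ (N / 3) ≤ T N := by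
  induction N using Nat.strong_induction_on with
  | _ N ih =>
    rcases lt_or_ge N 3 with h | h
    · interval_cases N <;> simp [T_base0, T_base1, T_base2]
    · obtain ⟨M, rfl⟩ : ∃ M, N = M + 3 := ⟨N - 3, by omega⟩
      have h1 := ih M (by omega)
      have h2 := step M
      have h3 : (M + 3) / 3 = M / 3 + 1 := by omega
      rw [h3, pow_succ]
      omega

/-- `T(N) = Ω(2^{N/3})`: there is a constant `c > 0` with `T(N) ≥ c · 2^{N/3}`
for all `N ≥ 1`. -/
theorem T_exponential_lower_bound :
    ∃ c : ℝ, 0 < c ∧ ∀ N : ℕ, 1 ≤ N → c * (2 : ℝ) ^ ((N : ℝ) / 3) ≤ (T N : ℝ) := by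
  refine ⟨1/2, by norm_num, ?_⟩
  intro N _
  have hlt : N ≤ 3 * (N / 3) + 3 := by omega
  have hexp : (N : ℝ) / 3 ≤ ((N / 3 : ℕ) : ℝ) + 1 := by
    have : (N : ℝ) ≤ 3 * ((N / 3 : ℕ) : ℝ) + 3 := by exact_mod_cast hlt
    linarith
  have h1 : (2 : ℝ) ^ ((N : ℝ) / 3) ≤ (2 : ℝ) ^ (((N / 3 : ℕ) : ℝ) + 1) :=
    Real.rpow_le_rpow_of_exponent_le one_le_two hexp
  have h2 : (2 : ℝ) ^ (((N / 3 : ℕ) : ℝ) + 1) = 2 * (2 : ℝ) ^ (N / 3 : ℕ) := by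
    rw [Real.rpow_add (by norm_num), Real.rpow_one, Real.rpow_natCast]; ring
  have h3 : (2 : ℝ) ^ (N / 3 : ℕ) ≤ (T N : ℝ) := by exact_mod_cast T_pow N
  rw [h2] at h1
  linarith
end

section
/- Let β be the unique real root of the polynomial x³ − x − 1 = 0. Then there exist constants c₁ > 0 and c₂ > 0 such that for every integer N ≥ 1, c₁ · β^N ≤ T(N) ≤ c₂ · β^N; i.e., T(N) = Θ(β^N). -/
open Finset

lemma punctured_mono {A B : Finset ℕ} (h : A ⊆ B) (hp : Punctured B) : Punctured A :=
  fun i hi hi1 => hp i (h hi) (h hi1)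

lemma not_punctured_mono {A B : Finset ℕ} (h : A ⊆ B) (hnp : ¬ Punctured A) : ¬ Punctured B :=
  fun hp => hnp (punctured_mono h hp)

lemma not_punctured_erase {H : Finset ℕ} {m : ℕ} (hnp : ¬ Punctured H)
    (h1 : ∀ j ∈ H, j + 1 ≠ m) (h2 : m + 1 ∉ H) :
    ¬ Punctured (H.erase m) := by
  intro hq
  apply hnp
  intro j hj hj1
  by_cases hjm : j = m
  · exact h2 (hjm ▸ hj1)
  · exact hq j (Finset.mem_erase.mpr ⟨hjm, hj⟩)
      (Finset.mem_erase.mpr ⟨h1 j hj, hj1⟩)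

lemma pp_n2 (n : ℕ) {H : Finset ℕ} (hpp : PrimitivePunctured (n+3) H)
    (hmem : n+3 ∉ H) : n+2 ∈ H := by
  obtain ⟨hsub, hp, hmax⟩ := hpp
  by_contra hc
  apply hmax (n+3) (Finset.mem_Icc.mpr ⟨by omega, le_refl _⟩) hmem
  intro j hj hj1
  rw [Finset.mem_insert] at hj hj1
  rcases hj with rfl | hj
  · rcases hj1 with h | h
    · omega
    · have := hsub h; rw [Finset.mem_Icc] at this; omega
  · rcases hj1 with h | h
    · have h2 : j = n+2 := by omega
      exact hc (h2 ▸ hj)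
    · exact hp j hj h

lemma T_rec (n : ℕ) : T (n+3) = T (n+1) + T n := by
  classical
  have hsplit := Finset.card_filter_add_card_filter_not
    (s := (Finset.Icc 1 (n+3)).powerset.filter (PrimitivePunctured (n+3)))
    (p := fun H => n+3 ∈ H)
  have h1 : ((((Finset.Icc 1 (n+3)).powerset.filter (PrimitivePunctured (n+3))).filter
      (fun H => n+3 ∈ H))).card = T (n+1) := by
    refine Finset.card_bij' (fun H _ => H.erase (n+3)) (fun H _ => insert (n+3) H)
      ?_ ?_ ?_ ?_
    · -- erase maps into the T (n+1) set
      intro H hH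
      simp only [Finset.mem_filter, Finset.mem_powerset] at hH ⊢
      obtain ⟨⟨hsub, _, hp, hmax⟩, hmem⟩ := hH
      have hn2 : n+2 ∉ H := fun h => hp (n+2) h hmem
      have hsub' : H.erase (n+3) ⊆ Finset.Icc 1 (n+1) := by
        intro i hi
        rw [Finset.mem_erase] at hi
        have h4 := hsub hi.2
        rw [Finset.mem_Icc] at h4 ⊢
        have h5 : i ≠ n+2 := fun h => hn2 (h ▸ hi.2)
        have h6 := hi.1
        omega
      refine ⟨hsub', hsub', punctured_mono (Finset.erase_subset _ _) hp, ?_⟩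
      intro i hi hinot
      rw [Finset.mem_Icc] at hi
      have hiH : i ∉ H := fun h =>
        hinot (Finset.mem_erase.mpr ⟨by omega, h⟩)
      have hnp := hmax i (Finset.mem_Icc.mpr ⟨hi.1, by omega⟩) hiH
      have key : ¬ Punctured ((insert i H).erase (n+3)) := by
        apply not_punctured_erase hnp
        · intro j hj hje
          rw [Finset.mem_insert] at hj
          rcases hj with rfl | hj
          · omega
          · have h7 : j = n+2 := by omega
            exact hn2 (h7 ▸ hj)
        · intro h
          rw [Finset.mem_insert] at h
          rcases h with h | h
          · omega
          · have := hsub h; rw [Finset.mem_Icc] at this; omega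
      rwa [Finset.erase_insert_of_ne (by omega : i ≠ n+3)] at key
    · -- insert maps into the filtered set
      intro H hH
      simp only [Finset.mem_filter, Finset.mem_powerset] at hH ⊢
      obtain ⟨hsub, _, hp, hmax⟩ := hH
      have hn3 : n+3 ∉ H := fun h => by
        have := hsub h; rw [Finset.mem_Icc] at this; omega
      have hsub' : insert (n+3) H ⊆ Finset.Icc 1 (n+3) := by
        intro i hi
        rw [Finset.mem_insert] at hi
        rw [Finset.mem_Icc]
        rcases hi with rfl | hi
        · omega
        · have := hsub hi; rw [Finset.mem_Icc] at this; omega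
      have hp' : Punctured (insert (n+3) H) := by
        intro j hj hj1
        rw [Finset.mem_insert] at hj hj1
        rcases hj with rfl | hj
        · rcases hj1 with h | h
          · omega
          · have := hsub h; rw [Finset.mem_Icc] at this; omega
        · rcases hj1 with h | h
          · have h7 : j = n+2 := by omega
            subst h7
            have := hsub hj; rw [Finset.mem_Icc] at this; omega
          · exact hp j hj h
      refine ⟨⟨hsub', hsub', hp', ?_⟩, Finset.mem_insert_self _ _⟩
      intro i hi hinot
      rw [Finset.mem_Icc] at hi
      rw [Finset.mem_insert] at hinot
      push_neg at hinot
      by_cases hi2 : i = n+2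
      · subst hi2
        intro hq
        exact hq (n+2) (Finset.mem_insert_self _ _)
          (Finset.mem_insert_of_mem (Finset.mem_insert_self _ _))
      · have h8 : i ≤ n+1 := by omega
        have hnp := hmax i (Finset.mem_Icc.mpr ⟨hi.1, h8⟩) hinot.2
        exact not_punctured_mono
          (Finset.insert_subset_insert _ (Finset.subset_insert _ _)) hnp
    · intro H hH
      simp only [Finset.mem_filter] at hH
      exact Finset.insert_erase hH.2
    · intro H hH
      simp only [Finset.mem_filter, Finset.mem_powerset] at hH
      apply Finset.erase_insert
      intro h
      have := hH.1 h; rw [Finset.mem_Icc] at this; omega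
  have h2 : ((((Finset.Icc 1 (n+3)).powerset.filter (PrimitivePunctured (n+3))).filter
      (fun H => ¬ n+3 ∈ H))).card = T n := by
    refine Finset.card_bij' (fun H _ => H.erase (n+2)) (fun H _ => insert (n+2) H)
      ?_ ?_ ?_ ?_
    · intro H hH
      simp only [Finset.mem_filter, Finset.mem_powerset] at hH ⊢
      obtain ⟨⟨hsub, hpp⟩, hmem⟩ := hH
      have hn2 : n+2 ∈ H := pp_n2 n hpp hmem
      obtain ⟨_, hp, hmax⟩ := hpp
      have hn1 : n+1 ∉ H := fun h => hp (n+1) h hn2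
      have hsub' : H.erase (n+2) ⊆ Finset.Icc 1 n := by
        intro i hi
        rw [Finset.mem_erase] at hi
        have h4 := hsub hi.2
        rw [Finset.mem_Icc] at h4 ⊢
        have h5 : i ≠ n+3 := fun h => hmem (h ▸ hi.2)
        have h6 : i ≠ n+1 := fun h => hn1 (h ▸ hi.2)
        have h7 := hi.1
        omega
      refine ⟨hsub', hsub', punctured_mono (Finset.erase_subset _ _) hp, ?_⟩
      intro i hi hinot
      rw [Finset.mem_Icc] at hi
      have hiH : i ∉ H := fun h =>
        hinot (Finset.mem_erase.mpr ⟨by omega, h⟩)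
      have hnp := hmax i (Finset.mem_Icc.mpr ⟨hi.1, by omega⟩) hiH
      have key : ¬ Punctured ((insert i H).erase (n+2)) := by
        apply not_punctured_erase hnp
        · intro j hj hje
          rw [Finset.mem_insert] at hj
          rcases hj with rfl | hj
          · omega
          · have h7 : j = n+1 := by omega
            exact hn1 (h7 ▸ hj)
        · intro h
          rw [Finset.mem_insert] at h
          rcases h with h | h
          · omega
          · exact hmem h
      rwa [Finset.erase_insert_of_ne (by omega : i ≠ n+2)] at key
    · intro H hH
      simp only [Finset.mem_filter, Finset.mem_powerset] at hH ⊢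
      obtain ⟨hsub, _, hp, hmax⟩ := hH
      have hn2 : n+2 ∉ H := fun h => by
        have := hsub h; rw [Finset.mem_Icc] at this; omega
      have hn3 : n+3 ∉ insert (n+2) H := by
        rw [Finset.mem_insert]
        push_neg
        refine ⟨by omega, fun h => ?_⟩
        have := hsub h; rw [Finset.mem_Icc] at this; omega
      have hsub' : insert (n+2) H ⊆ Finset.Icc 1 (n+3) := by
        intro i hi
        rw [Finset.mem_insert] at hi
        rw [Finset.mem_Icc]
        rcases hi with rfl | hi
        · omega
        · have := hsub hi; rw [Finset.mem_Icc] at this; omega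
      have hp' : Punctured (insert (n+2) H) := by
        intro j hj hj1
        rw [Finset.mem_insert] at hj hj1
        rcases hj with rfl | hj
        · rcases hj1 with h | h
          · omega
          · have := hsub h; rw [Finset.mem_Icc] at this; omega
        · rcases hj1 with h | h
          · have h7 : j = n+1 := by omega
            subst h7
            have := hsub hj; rw [Finset.mem_Icc] at this; omega
          · exact hp j hj h
      refine ⟨⟨hsub', hsub', hp', ?_⟩, hn3⟩
      intro i hi hinot
      rw [Finset.mem_Icc] at hi
      rw [Finset.mem_insert] at hinot
      push_neg at hinot
      by_cases hi3 : i = n+3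
      · subst hi3
        intro hq
        exact hq (n+2) (Finset.mem_insert_of_mem (Finset.mem_insert_self _ _))
          (Finset.mem_insert_self _ _)
      · by_cases hi1 : i = n+1
        · subst hi1
          intro hq
          exact hq (n+1) (Finset.mem_insert_self _ _)
            (Finset.mem_insert_of_mem (Finset.mem_insert_self _ _))
        · have h8 : i ≤ n := by omega
          have hnp := hmax i (Finset.mem_Icc.mpr ⟨hi.1, h8⟩) hinot.2
          exact not_punctured_mono
            (Finset.insert_subset_insert _ (Finset.subset_insert _ _)) hnp
    · intro H hH
      simp only [Finset.mem_filter, Finset.mem_powerset] at hH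
      exact Finset.insert_erase (pp_n2 n hH.1.2 hH.2)
    · intro H hH
      simp only [Finset.mem_filter, Finset.mem_powerset] at hH
      apply Finset.erase_insert
      intro h
      have := hH.1 h; rw [Finset.mem_Icc] at this; omega
  have hfin : ((Finset.Icc 1 (n+3)).powerset.filter (PrimitivePunctured (n+3))).card
      = T (n+1) + T n := by
    rw [← hsplit, h1, h2]
  exact hfin

/-- `T(N) = Θ(β^N)`, where `β` is the unique real root of `x³ - x - 1 = 0`. -/
theorem T_theta_beta (β : ℝ) (hroot : β ^ 3 - β - 1 = 0)
    (huniq : ∀ x : ℝ, x ^ 3 - x - 1 = 0 → x = β) :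
    ∃ c₁ : ℝ, 0 < c₁ ∧ ∃ c₂ : ℝ, 0 < c₂ ∧
      ∀ N : ℕ, 1 ≤ N → c₁ * β ^ N ≤ (T N : ℝ) ∧ (T N : ℝ) ≤ c₂ * β ^ N := by
  have hb3 : β ^ 3 = β + 1 := by linarith
  have hb1 : 1 < β := by nlinarith [sq_nonneg β, sq_nonneg (β - 1), sq_nonneg (β + 1)]
  have hbpos : 0 < β := lt_trans one_pos hb1
  refine ⟨1 / β ^ 3, by positivity, 2 / β, by positivity, ?_⟩
  intro N
  induction N using Nat.strong_induction_on with
  | _ N ih =>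
    intro hN
    by_cases h4 : N ≤ 3
    · -- base cases
      have hT1 : (1 : ℝ) ≤ (T N : ℝ) ∧ (T N : ℝ) ≤ 2 := by
        interval_cases N
        · norm_num [show T 1 = 1 from by decide]
        · norm_num [show T 2 = 2 from by decide]
        · norm_num [show T 3 = 2 from by decide]
      have hpowle : β ^ N ≤ β ^ 3 := pow_le_pow_right₀ hb1.le (by omega)
      have hpowge : β ≤ β ^ N := by
        calc β = β ^ 1 := (pow_one β).symm
        _ ≤ β ^ N := pow_le_pow_right₀ hb1.le hN
      constructor
      · have : 1 / β ^ 3 * β ^ N ≤ 1 := by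
          rw [div_mul_eq_mul_div, one_mul, div_le_one (by positivity)]
          exact hpowle
        linarith [hT1.1]
      · have : (2 : ℝ) ≤ 2 / β * β ^ N := by
          rw [div_mul_eq_mul_div, le_div_iff₀ hbpos]
          nlinarith
        linarith [hT1.2]
    · -- inductive step
      obtain ⟨m, rfl⟩ : ∃ m, N = m + 3 := ⟨N - 3, by omega⟩
      have hm : 1 ≤ m := by omega
      have e1 := ih m (by omega) hm
      have e2 := ih (m+1) (by omega) (by omega)
      have hrec : (T (m+3) : ℝ) = (T (m+1) : ℝ) + (T m : ℝ) := by
        rw [T_rec m]; push_cast; ring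
      have hpow : β ^ (m+3) = β ^ (m+1) + β ^ m := by
        have : β ^ (m+3) = β ^ m * β ^ 3 := by ring
        rw [this, hb3]
        ring
      constructor
      · rw [hrec, hpow]
        have := e1.1
        have := e2.1
        rw [mul_add]
        linarith
      · rw [hrec, hpow]
        have := e1.2
        have := e2.2
        rw [mul_add]
        linarith
end
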